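/- Type preservation for processes: if Γ ⊢ P : C and P ⇝ Q in the small-step operational semantics of processes, then there exists a process type D such that C ⇝ D (process type reduction) and Γ ⊢ Q : D. -/

import Mathlib

/-- Interrupt handler annotations: elements of the greatest fixed point of
`Φ(X) = Op ⇒ (O × X)_⊥` where `O = Set Op`, encoded as prefix-closed partial
maps from nonempty paths (lists of operation names) to signal annotations. -/
structure IAnn (Op : Type) : Type where
  val : List Op → Option (Set Op)
  nil_none : val [] = none
  prefix_closed : ∀ l l', l ≠ [] → (val (l ++ l')).isSome → (val l).isSome

namespace IAnn

variable {Op : Type}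

/-- The coinductive order `⊑_I` on interrupt handler annotations. -/
def le (ι ι' : IAnn Op) : Prop :=
  ∀ l o, ι.val l = some o → ∃ o', ι'.val l = some o' ∧ o ⊆ o'

/-- The least annotation (everywhere ⊥). -/
def bot (Op : Type) : IAnn Op :=
  ⟨fun _ => none, rfl, fun _ _ _ h => by simp at h⟩

/-- Join on `(Set Op)_⊥`. -/
def ojoin (a b : Option (Set Op)) : Option (Set Op) :=
  match a, b with
  | some x, some y => some (x ∪ y)
  | some x, none => some x
  | none, y => y

lemma ojoin_isSome (a b : Option (Set Op)) :
    (ojoin a b).isSome ↔ a.isSome ∨ b.isSome := by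
  cases a <;> cases b <;> simp [ojoin]

/-- The pointwise join `ι ⊔ ι'` of interrupt handler annotations. -/
def join (ι ι' : IAnn Op) : IAnn Op where
  val l := ojoin (ι.val l) (ι'.val l)
  nil_none := by show ojoin (ι.val []) (ι'.val []) = none; rw [ι.nil_none, ι'.nil_none]; rfl
  prefix_closed := fun l l' hl h => by
    rcases (ojoin_isSome _ _).mp h with h | h
    · exact (ojoin_isSome _ _).mpr (Or.inl (ι.prefix_closed l l' hl h))
    · exact (ojoin_isSome _ _).mpr (Or.inr (ι'.prefix_closed l l' hl h))

/-- The subtree of `ι` at `op`, i.e. the second component of `ι(op)` when defined. -/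
def subtree (ι : IAnn Op) (op : Op) : IAnn Op where
  val l := match l with
    | [] => none
    | a :: t => ι.val (op :: a :: t)
  nil_none := rfl
  prefix_closed := fun l l' hl h => by
    match l with
    | [] => exact absurd rfl hl
    | a :: t =>
      simp only [List.cons_append] at h
      exact ι.prefix_closed (op :: a :: t) l' (by simp) h

variable [DecidableEq Op]

/-- `ι[op ↦ ⊥]`: set `ι` to be undefined at `op`. -/
def update (ι : IAnn Op) (op : Op) : IAnn Op where
  val l := match l with
    | [] => none
    | op' :: rest => if op' = op then none else ι.val (op' :: rest)
  nil_none := rfl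
  prefix_closed := fun l l' hl h => by
    match l with
    | [] => exact absurd rfl hl
    | a :: t =>
      simp only [List.cons_append] at h
      by_cases hao : a = op
      · simp [hao] at h
      · simp only [if_neg hao] at h ⊢
        exact ι.prefix_closed (a :: t) l' (by simp) h

/-- The singleton annotation `{ op ↦ (o, ι) }`. -/
def single (op : Op) (o : Set Op) (ι : IAnn Op) : IAnn Op where
  val l := match l with
    | [] => none
    | op' :: rest =>
        if op' = op then (if rest = [] then some o else ι.val rest) else none
  nil_none := rfl
  prefix_closed := fun l l' hl h => by
    match l with
    | [] => exact absurd rfl hl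
    | a :: t =>
      simp only [List.cons_append] at h
      by_cases hao : a = op
      · simp only [if_pos hao] at h ⊢
        match t with
        | [] => simp
        | b :: u =>
          simp only [List.cons_append] at h ⊢
          rw [if_neg (by simp)] at h
          rw [if_neg (by simp)]
          exact ι.prefix_closed (b :: u) l' (by simp) h
      · simp [hao] at h

/-- The action `op ↓ (o, ι)` of an interrupt on an effect annotation. -/
def act (op : Op) (p : Set Op × IAnn Op) : Set Op × IAnn Op :=
  match p.2.val [op] with
  | some o' => (p.1 ∪ o', join (update p.2 op) (p.2.subtree op))
  | none => p

/-- The product order `⊑_{O×I}` on effect annotations. -/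
def leOI (p q : Set Op × IAnn Op) : Prop := p.1 ⊆ q.1 ∧ le p.2 q.2

/-- The action `ops ↓↓ (o, ι)` of a list of interrupts on an effect annotation. -/
def actList : List Op → Set Op × IAnn Op → Set Op × IAnn Op
  | [], p => p
  | op :: ops, p => act op (actList ops p)

end IAnn
/-- Process types `C, D ::= X!!(o,ι) | C || D`. -/
inductive PTy (V Op : Type) : Type where
  | run : V → Set Op → IAnn Op → PTy V Op
  | par : PTy V Op → PTy V Op → PTy V Op

namespace PTy

variable {V Op : Type} [DecidableEq Op]

/-- The interrupt action `op ↓ C` on process types. -/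
def pact (op : Op) : PTy V Op → PTy V Op
  | run X o ι => run X (IAnn.act op (o, ι)).1 (IAnn.act op (o, ι)).2
  | par C D => par (pact op C) (pact op D)

/-- The signal annotations `signals-of(C)` of a process type. -/
def signalsOf : PTy V Op → Set Op
  | run _ o _ => o
  | par C D => signalsOf C ∪ signalsOf D

/-- Process type reduction `C ⇝ D`. -/
inductive Red : PTy V Op → PTy V Op → Prop where
  | base (X : V) (o : Set Op) (ι : IAnn Op) : Red (run X o ι) (run X o ι)
  | act (X : V) (ops : List Op) (op : Op) (o : Set Op) (ι : IAnn Op) :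
      Red (run X (IAnn.actList ops (o, ι)).1 (IAnn.actList ops (o, ι)).2)
          (run X (IAnn.actList ops (IAnn.act op (o, ι))).1
                 (IAnn.actList ops (IAnn.act op (o, ι))).2)
  | par {C C' D D' : PTy V Op} : Red C C' → Red D D' → Red (par C D) (par C' D')
  | spawnL (X : V) (o : Set Op) (ι : IAnn Op) (Y : V) (o' : Set Op) (ι' : IAnn Op) :
      Red (run X o ι) (par (run X o ι) (run Y o' ι'))
  | spawnR (X : V) (o : Set Op) (ι : IAnn Op) (Y : V) (o' : Set Op) (ι' : IAnn Op) :
      Red (run Y o' ι') (par (run X o ι) (run Y o' ι'))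

end PTy

mutual
/-- Values of the λ_æ calculus (de Bruijn representation). -/
inductive Val (Op : Type) : Type where
  | var : ℕ → Val Op
  | unit : Val Op
  | pair : Val Op → Val Op → Val Op
  | inl : Val Op → Val Op
  | inr : Val Op → Val Op
  | lam : Comp Op → Val Op
  | prom : Val Op → Val Op                  -- fulfilled promise ⟨V⟩
  | box : Val Op → Val Op                   -- boxed value [V]

/-- Computations of the λ_æ calculus (de Bruijn representation). -/
inductive Comp (Op : Type) : Type where
  | ret : Val Op → Comp Op
  | letin : Comp Op → Comp Op → Comp Op     -- let x = M in N   (N binds 1)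
  | app : Val Op → Val Op → Comp Op
  | matchPair : Val Op → Comp Op → Comp Op  -- match V with ⟨x,y⟩ ↦ M  (M binds 2)
  | matchEmpty : Val Op → Comp Op
  | matchSum : Val Op → Comp Op → Comp Op → Comp Op  -- (each branch binds 1)
  | sig : Op → Val Op → Comp Op → Comp Op   -- ↑op(V, M)
  | int : Op → Val Op → Comp Op → Comp Op   -- ↓op(V, M)
  | handler : Op → Comp Op → Val Op → Comp Op → Comp Op
      -- promise (op x r s ↦ M) @ V as p in N   (M binds 3: x,r,s; N binds 1: p)
  | await : Val Op → Comp Op → Comp Op      -- await V until ⟨x⟩ in M  (M binds 1)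
  | unbox : Val Op → Comp Op → Comp Op      -- unbox V as [x] in M  (M binds 1)
  | spawn : Comp Op → Comp Op → Comp Op     -- spawn (M, N)
end

/-- Lifting a renaming under one binder. -/
def liftR (ρ : ℕ → ℕ) : ℕ → ℕ
  | 0 => 0
  | n + 1 => ρ n + 1

mutual
def renameV {Op : Type} (ρ : ℕ → ℕ) : Val Op → Val Op
  | .var n => .var (ρ n)
  | .unit => .unit
  | .pair a b => .pair (renameV ρ a) (renameV ρ b)
  | .inl a => .inl (renameV ρ a)
  | .inr a => .inr (renameV ρ a)
  | .lam m => .lam (renameC (liftR ρ) m)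
  | .prom a => .prom (renameV ρ a)
  | .box a => .box (renameV ρ a)

def renameC {Op : Type} (ρ : ℕ → ℕ) : Comp Op → Comp Op
  | .ret v => .ret (renameV ρ v)
  | .letin m n => .letin (renameC ρ m) (renameC (liftR ρ) n)
  | .app v w => .app (renameV ρ v) (renameV ρ w)
  | .matchPair v m => .matchPair (renameV ρ v) (renameC (liftR (liftR ρ)) m)
  | .matchEmpty v => .matchEmpty (renameV ρ v)
  | .matchSum v m n =>
      .matchSum (renameV ρ v) (renameC (liftR ρ) m) (renameC (liftR ρ) n)
  | .sig op v m => .sig op (renameV ρ v) (renameC ρ m)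
  | .int op v m => .int op (renameV ρ v) (renameC ρ m)
  | .handler op m v n =>
      .handler op (renameC (liftR (liftR (liftR ρ))) m) (renameV ρ v)
        (renameC (liftR ρ) n)
  | .await v m => .await (renameV ρ v) (renameC (liftR ρ) m)
  | .unbox v m => .unbox (renameV ρ v) (renameC (liftR ρ) m)
  | .spawn m n => .spawn (renameC ρ m) (renameC ρ n)
end

/-- Lifting a substitution under one binder. -/
def liftS {Op : Type} (σ : ℕ → Val Op) : ℕ → Val Op
  | 0 => .var 0
  | n + 1 => renameV Nat.succ (σ n)

mutual
def substV {Op : Type} (σ : ℕ → Val Op) : Val Op → Val Op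
  | .var n => σ n
  | .unit => .unit
  | .pair a b => .pair (substV σ a) (substV σ b)
  | .inl a => .inl (substV σ a)
  | .inr a => .inr (substV σ a)
  | .lam m => .lam (substC (liftS σ) m)
  | .prom a => .prom (substV σ a)
  | .box a => .box (substV σ a)

def substC {Op : Type} (σ : ℕ → Val Op) : Comp Op → Comp Op
  | .ret v => .ret (substV σ v)
  | .letin m n => .letin (substC σ m) (substC (liftS σ) n)
  | .app v w => .app (substV σ v) (substV σ w)
  | .matchPair v m => .matchPair (substV σ v) (substC (liftS (liftS σ)) m)
  | .matchEmpty v => .matchEmpty (substV σ v)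
  | .matchSum v m n =>
      .matchSum (substV σ v) (substC (liftS σ) m) (substC (liftS σ) n)
  | .sig op v m => .sig op (substV σ v) (substC σ m)
  | .int op v m => .int op (substV σ v) (substC σ m)
  | .handler op m v n =>
      .handler op (substC (liftS (liftS (liftS σ))) m) (substV σ v)
        (substC (liftS σ) n)
  | .await v m => .await (substV σ v) (substC (liftS σ) m)
  | .unbox v m => .unbox (substV σ v) (substC (liftS σ) m)
  | .spawn m n => .spawn (substC σ m) (substC σ n)
end

/-- Substitution `[V/0]` of a single value for the last-bound variable. -/
def sub1 {Op : Type} (v : Val Op) : ℕ → Val Op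
  | 0 => v
  | n + 1 => .var n

/-- Substitution `[V/1, W/0]` for the two variables of a pair match. -/
def sub2 {Op : Type} (v w : Val Op) : ℕ → Val Op
  | 0 => w
  | 1 => v
  | n + 2 => .var n

/-- Substitution `[V/x, R/r, W/s]` (`x = 2`, `r = 1`, `s = 0`) for the three
variables of an interrupt handler body. -/
def sub3 {Op : Type} (v r w : Val Op) : ℕ → Val Op
  | 0 => w
  | 1 => r
  | 2 => v
  | n + 3 => .var n

/-- The reinstallation function
`R = fun s' ↦ promise (op x r s ↦ M) @ s' as p in return p`. -/
def reinstall {Op : Type} (op : Op) (M : Comp Op) : Val Op :=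
  .lam (.handler op (renameC (liftR (liftR (liftR Nat.succ))) M)
          (.var 0) (.ret (.var 0)))

/-- Small-step operational semantics of computations. -/
inductive Step {Op : Type} : Comp Op → Comp Op → Prop where
  -- standard computation rules
  | beta {M V} : Step (.app (.lam M) V) (substC (sub1 V) M)
  | letRet {V N} : Step (.letin (.ret V) N) (substC (sub1 V) N)
  | matchPair {V W M} : Step (.matchPair (.pair V W) M) (substC (sub2 V W) M)
  | matchInl {V M N} : Step (.matchSum (.inl V) M N) (substC (sub1 V) M)
  | matchInr {W M N} : Step (.matchSum (.inr W) M N) (substC (sub1 W) N)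
  -- algebraicity of signals, interrupt handlers, awaiting, and process creation
  | letSig {op V M N} : Step (.letin (.sig op V M) N) (.sig op V (.letin M N))
  | letHandler {op M V N₁ N₂} :
      Step (.letin (.handler op M V N₁) N₂)
           (.handler op M V (.letin N₁ (renameC (liftR Nat.succ) N₂)))
  | letAwait {V M N} :
      Step (.letin (.await V M) N)
           (.await V (.letin M (renameC (liftR Nat.succ) N)))
  | letSpawn {M N₁ N₂} : Step (.letin (.spawn M N₁) N₂) (.spawn M (.letin N₁ N₂))
  -- commutativity of signals and process creation with interrupt handlers
  | handlerSig {op M V op' W N} :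
      Step (.handler op M V (.sig op' (renameV Nat.succ W) N))
           (.sig op' W (.handler op M V N))
  | handlerSpawn {op M V N₁ N₂} :
      Step (.handler op M V (.spawn (renameC Nat.succ N₁) N₂))
           (.spawn N₁ (.handler op M V N₂))
  -- interrupt propagation
  | intRet {op V W} : Step (.int op V (.ret W)) (.ret W)
  | intSig {op V op' W M} :
      Step (.int op V (.sig op' W M)) (.sig op' W (.int op V M))
  | intHandler {op V M W N} :
      Step (.int op V (.handler op M W N))
           (.letin (substC (sub3 V (reinstall op M) W) M)
                   (.int op (renameV Nat.succ V) N))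
  | intHandlerNeq {op op' V M W N} :
      op ≠ op' →
      Step (.int op' V (.handler op M W N))
           (.handler op M W (.int op' (renameV Nat.succ V) N))
  | intAwait {op V W M} :
      Step (.int op V (.await W M)) (.await W (.int op (renameV Nat.succ V) M))
  | intSpawn {op V M N} : Step (.int op V (.spawn M N)) (.spawn M (.int op V N))
  -- awaiting a fulfilled promise, and unboxing
  | awaitProm {V M} : Step (.await (.prom V) M) (substC (sub1 V) M)
  | unboxBox {V M} : Step (.unbox (.box V) M) (substC (sub1 V) M)
  -- evaluation contexts
  | ctxLet {M M' N} : Step M M' → Step (.letin M N) (.letin M' N)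
  | ctxSig {op V M M'} : Step M M' → Step (.sig op V M) (.sig op V M')
  | ctxInt {op V M M'} : Step M M' → Step (.int op V M) (.int op V M')
  | ctxHandler {op M V N N'} :
      Step N N' → Step (.handler op M V N) (.handler op M V N')
  | ctxSpawn {M N N'} : Step N N' → Step (.spawn M N) (.spawn M N')

/-- Result forms `RunRes⟨Ψ | M⟩` of computations running inside a process;
`Ψ` is the set of (de Bruijn indices of) promise variables bound by
enveloping interrupt handlers. -/
inductive RunRes {Op : Type} : Set ℕ → Comp Op → Prop where
  | ret {Ψ V} : RunRes Ψ (.ret V)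
  | await {Ψ : Set ℕ} {p M} : p ∈ Ψ → RunRes Ψ (.await (.var p) M)
  | handler {Ψ : Set ℕ} {op M V N} :
      RunRes (insert 0 {n | ∃ m ∈ Ψ, n = m + 1}) N →
      RunRes Ψ (.handler op M V N)

/-- Result forms `CompRes⟨Ψ | M⟩` of computations. -/
inductive CompRes {Op : Type} : Set ℕ → Comp Op → Prop where
  | run {Ψ M} : RunRes Ψ M → CompRes Ψ M
  | sig {Ψ op V M} : CompRes Ψ M → CompRes Ψ (.sig op V M)
  | spawn {Ψ M N} : CompRes Ψ N → CompRes Ψ (.spawn M N)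

/-- Value types of the λ_æ calculus. -/
inductive VTy (Op : Type) : Type where
  | base : VTy Op
  | unit : VTy Op
  | empty : VTy Op
  | prod : VTy Op → VTy Op → VTy Op
  | sum : VTy Op → VTy Op → VTy Op
  | fn : VTy Op → VTy Op → Set Op → IAnn Op → VTy Op  -- X → Y!(o,ι)
  | prom : VTy Op → VTy Op                            -- ⟨X⟩
  | box : VTy Op → VTy Op                             -- [X]

/-- Mobile types: ground types extended with the modal box type. -/
inductive Mobile {Op : Type} : VTy Op → Prop where
  | base : Mobile .base
  | unit : Mobile .unit
  | empty : Mobile .empty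
  | prod {A B} : Mobile A → Mobile B → Mobile (.prod A B)
  | sum {A B} : Mobile A → Mobile B → Mobile (.sum A B)
  | box {X} : Mobile (.box X)

/-- Typing context entries: variable bindings and Fitch-style locks. -/
inductive CtxE (Op : Type) : Type where
  | tyvar : VTy Op → CtxE Op
  | lock : CtxE Op

/-- Typing contexts (most recent entry first). -/
abbrev Ctx (Op : Type) := List (CtxE Op)

/-- `Lookup Γ n X b`: the de Bruijn variable `n` has type `X` in `Γ`, and
`b` records whether a lock `🔒` occurs between the binding and the use. -/
inductive Lookup {Op : Type} : Ctx Op → ℕ → VTy Op → Bool → Prop where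
  | here {Γ X} : Lookup (CtxE.tyvar X :: Γ) 0 X false
  | thereVar {Γ n X Y b} : Lookup Γ n X b → Lookup (CtxE.tyvar Y :: Γ) (n + 1) X b
  | thereLock {Γ n X b} : Lookup Γ n X b → Lookup (CtxE.lock :: Γ) n X true

mutual
/-- Value typing `Γ ⊢ V : X` of the λ_æ calculus, relative to a signature
`sg` assigning payload types to signal/interrupt names. -/
inductive HasV {Op : Type} [DecidableEq Op] (sg : Op → VTy Op) :
    Ctx Op → Val Op → VTy Op → Prop where
  | var {Γ n X b} : Lookup Γ n X b → (b = true → Mobile X) →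
      HasV sg Γ (.var n) X
  | unit {Γ} : HasV sg Γ .unit .unit
  | pair {Γ V W X Y} : HasV sg Γ V X → HasV sg Γ W Y →
      HasV sg Γ (.pair V W) (.prod X Y)
  | inl {Γ V X Y} : HasV sg Γ V X → HasV sg Γ (.inl V) (.sum X Y)
  | inr {Γ W X Y} : HasV sg Γ W Y → HasV sg Γ (.inr W) (.sum X Y)
  | lam {Γ M X Y o ι} : HasC sg (CtxE.tyvar X :: Γ) M Y o ι →
      HasV sg Γ (.lam M) (.fn X Y o ι)
  | prom {Γ V X} : HasV sg Γ V X → HasV sg Γ (.prom V) (.prom X)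
  | box {Γ V X} : HasV sg (CtxE.lock :: Γ) V X → HasV sg Γ (.box V) (.box X)

/-- Computation typing `Γ ⊢ M : X!(o,ι)` of the λ_æ calculus. -/
inductive HasC {Op : Type} [DecidableEq Op] (sg : Op → VTy Op) :
    Ctx Op → Comp Op → VTy Op → Set Op → IAnn Op → Prop where
  | ret {Γ V X o ι} : HasV sg Γ V X → HasC sg Γ (.ret V) X o ι
  | letin {Γ M N X Y o ι} : HasC sg Γ M X o ι →
      HasC sg (CtxE.tyvar X :: Γ) N Y o ι → HasC sg Γ (.letin M N) Y o ι
  | app {Γ V W X Y o ι} : HasV sg Γ V (.fn X Y o ι) → HasV sg Γ W X →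
      HasC sg Γ (.app V W) Y o ι
  | matchPair {Γ V M X Y Z o ι} : HasV sg Γ V (.prod X Y) →
      HasC sg (CtxE.tyvar Y :: CtxE.tyvar X :: Γ) M Z o ι →
      HasC sg Γ (.matchPair V M) Z o ι
  | matchEmpty {Γ V Z o ι} : HasV sg Γ V .empty →
      HasC sg Γ (.matchEmpty V) Z o ι
  | matchSum {Γ V M N X Y Z o ι} : HasV sg Γ V (.sum X Y) →
      HasC sg (CtxE.tyvar X :: Γ) M Z o ι →
      HasC sg (CtxE.tyvar Y :: Γ) N Z o ι →
      HasC sg Γ (.matchSum V M N) Z o ι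
  | sig {Γ op V M X o ι} : op ∈ o → HasV sg Γ V (sg op) →
      HasC sg Γ M X o ι → HasC sg Γ (.sig op V M) X o ι
  | int {Γ op V M X o ι} : HasV sg Γ V (sg op) → HasC sg Γ M X o ι →
      HasC sg Γ (.int op V M) X (IAnn.act op (o, ι)).1 (IAnn.act op (o, ι)).2
  | handler {Γ op M V N S X Y o ι o' ι' o''} :
      ι.val [op] = some o'' → o' ⊆ o'' → IAnn.le ι' (ι.subtree op) →
      HasC sg (CtxE.tyvar S ::
               CtxE.tyvar (.fn S (.prom X) (∅ : Set Op) (IAnn.single op o' ι')) ::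
               CtxE.tyvar (sg op) :: Γ) M (.prom X) o' ι' →
      HasV sg Γ V S →
      HasC sg (CtxE.tyvar (.prom X) :: Γ) N Y o ι →
      HasC sg Γ (.handler op M V N) Y o ι
  | await {Γ V M X Y o ι} : HasV sg Γ V (.prom X) →
      HasC sg (CtxE.tyvar X :: Γ) M Y o ι → HasC sg Γ (.await V M) Y o ι
  | unbox {Γ V M X Y o ι} : HasV sg Γ V (.box X) →
      HasC sg (CtxE.tyvar X :: Γ) M Y o ι → HasC sg Γ (.unbox V M) Y o ι
  | spawn {Γ M N X Y o ι o' ι'} : HasC sg (CtxE.lock :: Γ) M X o ι →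
      HasC sg Γ N Y o' ι' → HasC sg Γ (.spawn M N) Y o' ι'
  | subsume {Γ M X o ι o' ι'} : HasC sg Γ M X o ι → o ⊆ o' → IAnn.le ι ι' →
      HasC sg Γ M X o' ι'
end

/-- Processes of the λ_æ calculus. -/
inductive Proc (Op : Type) : Type where
  | run : Comp Op → Proc Op
  | par : Proc Op → Proc Op → Proc Op
  | sig : Op → Val Op → Proc Op → Proc Op   -- ↑op(V, P)
  | int : Op → Val Op → Proc Op → Proc Op   -- ↓op(V, P)

/-- Small-step operational semantics of processes. -/
inductive PStep {Op : Type} : Proc Op → Proc Op → Prop where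
  | run {M N} : Step M N → PStep (.run M) (.run N)
  | hoist {op V M} : PStep (.run (.sig op V M)) (.sig op V (.run M))
  | spawn {M N} : PStep (.run (.spawn M N)) (.par (.run M) (.run N))
  | bcastL {op V P Q} :
      PStep (.par (.sig op V P) Q) (.sig op V (.par P (.int op V Q)))
  | bcastR {op V P Q} :
      PStep (.par P (.sig op V Q)) (.sig op V (.par (.int op V P) Q))
  | intRun {op V M} : PStep (.int op V (.run M)) (.run (.int op V M))
  | intPar {op V P Q} :
      PStep (.int op V (.par P Q)) (.par (.int op V P) (.int op V Q))
  | intSig {op V op' W P} :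
      PStep (.int op V (.sig op' W P)) (.sig op' W (.int op V P))
  | ctxParL {P P' Q} : PStep P P' → PStep (.par P Q) (.par P' Q)
  | ctxParR {P Q Q'} : PStep Q Q' → PStep (.par P Q) (.par P Q')
  | ctxSig {op V P P'} : PStep P P' → PStep (.sig op V P) (.sig op V P')
  | ctxInt {op V P P'} : PStep P P' → PStep (.int op V P) (.int op V P')

/-- Process typing `Γ ⊢ P : C`. -/
inductive HasP {Op : Type} [DecidableEq Op] (sg : Op → VTy Op) :
    Ctx Op → Proc Op → PTy (VTy Op) Op → Prop where
  | run {Γ M X o ι} : HasC sg Γ M X o ι →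
      HasP sg Γ (.run M) (PTy.run X o ι)
  | par {Γ P Q C D} : HasP sg Γ P C → HasP sg Γ Q D →
      HasP sg Γ (.par P Q) (PTy.par C D)
  | sig {Γ op V P C} : op ∈ PTy.signalsOf C → HasV sg Γ V (sg op) →
      HasP sg Γ P C → HasP sg Γ (.sig op V P) C
  | int {Γ op V P C} : HasV sg Γ V (sg op) → HasP sg Γ P C →
      HasP sg Γ (.int op V P) (PTy.pact op C)

namespace IAnn

variable {Op : Type}

theorem le_refl (ι : IAnn Op) : le ι ι := fun l o h => ⟨o, h, subset_rfl⟩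

theorem le_trans {a b c : IAnn Op} (h1 : le a b) (h2 : le b c) : le a c := by
  intro l o h
  obtain ⟨o', h', hs⟩ := h1 l o h
  obtain ⟨o'', h'', hs'⟩ := h2 l o' h'
  exact ⟨o'', h'', hs.trans hs'⟩

theorem subtree_mono {ι ι' : IAnn Op} (h : le ι ι') (op : Op) :
    le (ι.subtree op) (ι'.subtree op) := by
  intro l o hl
  match l with
  | [] => simp [subtree] at hl
  | a :: t => exact h (op :: a :: t) o hl

theorem le_join_left (a b : IAnn Op) : le a (join a b) := by
  intro l o h
  show ∃ o', ojoin (a.val l) (b.val l) = some o' ∧ o ⊆ o'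
  rw [h]; cases b.val l <;> simp [ojoin]

theorem le_join_right (a b : IAnn Op) : le b (join a b) := by
  intro l o h
  show ∃ o', ojoin (a.val l) (b.val l) = some o' ∧ o ⊆ o'
  rw [h]; cases a.val l <;> simp [ojoin]

theorem join_mono {a a' b b' : IAnn Op} (h1 : le a a') (h2 : le b b') :
    le (join a b) (join a' b') := by
  intro l o h
  show ∃ o', ojoin (a'.val l) (b'.val l) = some o' ∧ o ⊆ o'
  have h' : ojoin (a.val l) (b.val l) = some o := h
  cases ha : a.val l with
  | some x =>
    obtain ⟨x', hx', hxs⟩ := h1 l x ha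
    rw [hx']
    cases hb : b.val l with
    | some y =>
      obtain ⟨y', hy', hys⟩ := h2 l y hb
      rw [hy']
      rw [ha, hb] at h'
      simp [ojoin] at h' ⊢
      rw [← h']
      exact Set.union_subset_union hxs hys
    | none =>
      rw [ha, hb] at h'
      simp [ojoin] at h'
      cases hb' : b'.val l <;> simp [ojoin] <;> rw [← h']
      · exact hxs
      · exact hxs.trans Set.subset_union_left
  | none =>
    rw [ha] at h'
    simp [ojoin] at h'
    cases hb : b.val l with
    | some y =>
      rw [hb] at h'; simp [ojoin] at h'
      obtain ⟨y', hy', hys⟩ := h2 l y hb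
      rw [hy']
      cases ha' : a'.val l <;> simp [ojoin] <;> rw [← h']
      · exact hys
      · exact hys.trans Set.subset_union_right
    | none => rw [hb] at h'; simp [ojoin] at h'

variable [DecidableEq Op]

theorem fst_act (op : Op) (p : Set Op × IAnn Op) : p.1 ⊆ (act op p).1 := by
  unfold act
  cases h : p.2.val [op] <;> simp

theorem ojoin_some_left {a b : Option (Set Op)} {x : Set Op} (h : a = some x) :
    ∃ z, ojoin a b = some z ∧ x ⊆ z := by
  subst h; cases b <;> simp [ojoin]

theorem ojoin_some_right {a b : Option (Set Op)} {y : Set Op} (h : b = some y) :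
    ∃ z, ojoin a b = some z ∧ y ⊆ z := by
  subst h; cases a <;> simp [ojoin]

theorem ojoin_mem {a b : Option (Set Op)} {o : Set Op} {x : Op}
    (h : ojoin a b = some o) (hx : x ∈ o) :
    (∃ oa, a = some oa ∧ x ∈ oa) ∨ (∃ ob, b = some ob ∧ x ∈ ob) := by
  cases a with
  | none =>
    cases b with
    | none => simp [ojoin] at h
    | some y => simp [ojoin] at h; subst h; exact Or.inr ⟨_, rfl, hx⟩
  | some x' =>
    cases b with
    | none => simp [ojoin] at h; subst h; exact Or.inl ⟨_, rfl, hx⟩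
    | some y =>
      simp [ojoin] at h; subst h
      rcases hx with h | h
      · exact Or.inl ⟨_, rfl, h⟩
      · exact Or.inr ⟨_, rfl, h⟩

/-- Domination: `q` is obtained from `p` by triggering some interrupt handlers
and possibly enlarging annotations. -/
def Dom (p q : Set Op × IAnn Op) : Prop :=
  p.1 ⊆ q.1 ∧ ∀ l o, p.2.val l = some o → ∀ x ∈ o,
    (∃ s o', s ≠ [] ∧ s <:+ l ∧ q.2.val s = some o' ∧ x ∈ o') ∨ x ∈ q.1

theorem Dom.refl (p : Set Op × IAnn Op) : Dom p p := by
  refine ⟨subset_rfl, fun l o h x hx => Or.inl ⟨l, o, ?_, List.suffix_refl l, h, hx⟩⟩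
  rintro rfl; rw [p.2.nil_none] at h; exact Option.some_ne_none _ h.symm

end IAnn

namespace IAnn

variable {Op : Type} [DecidableEq Op]

theorem act_eq_some {q : Set Op × IAnn Op} {op : Op} {o₂ : Set Op}
    (h : q.2.val [op] = some o₂) :
    act op q = (q.1 ∪ o₂, join (update q.2 op) (q.2.subtree op)) := by
  unfold act; rw [h]

theorem act_eq_none {q : Set Op × IAnn Op} {op : Op} (h : q.2.val [op] = none) :
    act op q = q := by
  unfold act; rw [h]

/-- A defined node of `q` survives (at a suffix position) into `act op q`,
or its label is flushed into the signal component. -/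
theorem act_val_preserve (q : Set Op × IAnn Op) (op : Op) (s : List Op) (o' : Set Op)
    (hs : s ≠ []) (h : q.2.val s = some o') :
    (∃ t z, t ≠ [] ∧ t <:+ s ∧ (act op q).2.val t = some z ∧ o' ⊆ z) ∨
      o' ⊆ (act op q).1 := by
  cases hq : q.2.val [op] with
  | none => rw [act_eq_none hq]; exact Or.inl ⟨s, o', hs, List.suffix_refl s, h, subset_rfl⟩
  | some o₂ =>
    rw [act_eq_some hq]
    match s with
    | [] => exact absurd rfl hs
    | a :: t =>
      by_cases hao : a = op
      · subst hao
        match t with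
        | [] =>
          rw [hq] at h; injection h with h; subst h
          exact Or.inr (by exact Set.subset_union_right)
        | b :: u =>
          have hsub : (q.2.subtree a).val (b :: u) = some o' := h
          obtain ⟨z, hz, hzs⟩ := ojoin_some_right (a := (update q.2 a).val (b :: u)) hsub
          exact Or.inl ⟨b :: u, z, by simp, List.suffix_cons a (b :: u), hz, hzs⟩
      · have hupd : (update q.2 op).val (a :: t) = some o' := by
          show (if a = op then none else q.2.val (a :: t)) = some o'
          rw [if_neg hao]; exact h
        obtain ⟨z, hz, hzs⟩ := ojoin_some_left (b := (q.2.subtree op).val (a :: t)) hupd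
        exact Or.inl ⟨a :: t, z, by simp, List.suffix_refl _, hz, hzs⟩

theorem dom_act_self (op : Op) (p : Set Op × IAnn Op) : Dom p (act op p) := by
  cases hp : p.2.val [op] with
  | none => rw [act_eq_none hp]; exact Dom.refl p
  | some o₁ =>
    rw [act_eq_some hp]
    constructor
    · exact Set.subset_union_left
    · intro l o h x hx
      match l with
      | [] => rw [p.2.nil_none] at h; exact (Option.some_ne_none _ h.symm).elim
      | a :: t =>
        by_cases hao : a = op
        · subst hao
          match t with
          | [] =>
            rw [hp] at h; injection h with h; subst h
            exact Or.inr (Set.mem_union_right _ hx)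
          | b :: u =>
            have hsub : (p.2.subtree a).val (b :: u) = some o := h
            obtain ⟨z, hz, hzs⟩ := ojoin_some_right (a := (update p.2 a).val (b :: u)) hsub
            exact Or.inl ⟨b :: u, z, by simp, (List.suffix_cons a (b :: u)), hz, hzs hx⟩
        · have hupd : (update p.2 op).val (a :: t) = some o := by
            show (if a = op then none else p.2.val (a :: t)) = some o
            rw [if_neg hao]; exact h
          obtain ⟨z, hz, hzs⟩ := ojoin_some_left (b := (p.2.subtree op).val (a :: t)) hupd
          exact Or.inl ⟨a :: t, z, by simp, List.suffix_refl _, hz, hzs hx⟩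

theorem dom_act {p q : Set Op × IAnn Op} (h : Dom p q) (op : Op) :
    Dom (act op p) (act op q) := by
  obtain ⟨h1, h2⟩ := h
  -- transfer of p-nodes into act op q
  have trans : ∀ l o, p.2.val l = some o → ∀ x ∈ o,
      (∃ s o', s ≠ [] ∧ s <:+ l ∧ (act op q).2.val s = some o' ∧ x ∈ o') ∨
        x ∈ (act op q).1 := by
    intro l o hl x hx
    rcases h2 l o hl x hx with ⟨s, o', hs, hsfx, hqs, hxo'⟩ | hxq
    · rcases act_val_preserve q op s o' hs hqs with ⟨t, z, ht, htfx, hz, hzs⟩ | hflush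
      · exact Or.inl ⟨t, z, ht, htfx.trans hsfx, hz, hzs hxo'⟩
      · exact Or.inr (hflush hxo')
    · exact Or.inr (fst_act op q hxq)
  cases hp : p.2.val [op] with
  | none => rw [act_eq_none hp]; exact ⟨h1.trans (fst_act op q), trans⟩
  | some o₁ =>
    rw [act_eq_some hp]
    constructor
    · -- fst component
      apply Set.union_subset
      · exact h1.trans (fst_act op q)
      · intro x hx
        rcases h2 [op] o₁ hp x hx with ⟨s, o', hs, hsfx, hqs, hxo'⟩ | hxq
        · have hseq : s = [op] := by
            rcases List.suffix_cons_iff.mp hsfx with h | h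
            · exact h
            · exact absurd (List.suffix_nil.mp h) hs
          subst hseq
          rw [act_eq_some hqs]
          exact Set.mem_union_right _ hxo'
        · exact fst_act op q hxq
    · -- node component
      intro l o hl x hx
      have hl' : ojoin ((update p.2 op).val l) ((p.2.subtree op).val l) = some o := hl
      rcases ojoin_mem hl' hx with ⟨oa, hoa, hxa⟩ | ⟨ob, hob, hxb⟩
      · -- survives from update part: p.2.val l = some oa
        have hpl : p.2.val l = some oa := by
          match l with
          | [] => exact (Option.some_ne_none _ hoa.symm).elim
          | a :: t =>
            have : (if a = op then none else p.2.val (a :: t)) = some oa := hoa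
            by_cases hao : a = op
            · rw [if_pos hao] at this; exact (Option.some_ne_none _ this.symm).elim
            · rw [if_neg hao] at this; exact this
        exact trans l oa hpl x hxa
      · -- from the promoted subtree: p.2.val (op :: l) = some ob, l ≠ []
        match l with
        | [] => exact (Option.some_ne_none _ hob.symm).elim
        | a :: t =>
          have hpl : p.2.val (op :: a :: t) = some ob := hob
          rcases h2 (op :: a :: t) ob hpl x hxb with ⟨s, o', hs, hsfx, hqs, hxo'⟩ | hxq
          · rcases List.suffix_cons_iff.mp hsfx with hseq | hsfx'
            · -- s = op :: a :: t : q must also have the op-child; it gets promoted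
              subst hseq
              have hq1 : (q.2.val [op]).isSome := by
                have := q.2.prefix_closed [op] (a :: t) (by simp)
                  (by rw [List.singleton_append, hqs]; rfl)
                exact this
              obtain ⟨o₂, hq2⟩ := Option.isSome_iff_exists.mp hq1
              rw [act_eq_some hq2]
              have hsub : (q.2.subtree op).val (a :: t) = some o' := hqs
              obtain ⟨z, hz, hzs⟩ := ojoin_some_right (a := (update q.2 op).val (a :: t)) hsub
              exact Or.inl ⟨a :: t, z, by simp, List.suffix_refl _, hz, hzs hxo'⟩
            · -- s is a suffix of a :: t
              rcases act_val_preserve q op s o' hs hqs with ⟨t', z, ht', htfx, hz, hzs⟩ | hflush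
              · exact Or.inl ⟨t', z, ht', htfx.trans hsfx', hz, hzs hxo'⟩
              · exact Or.inr (hflush hxo')
          · exact Or.inr (fst_act op q hxq)

theorem dom_actList {p q : Set Op × IAnn Op} (h : Dom p q) (ops : List Op) :
    Dom (IAnn.actList ops p) (IAnn.actList ops q) := by
  induction ops with
  | nil => exact h
  | cons op ops ih => exact dom_act ih op

theorem actList_fst_act (ops : List Op) (op : Op) (p : Set Op × IAnn Op) :
    (actList ops p).1 ⊆ (actList ops (act op p)).1 :=
  (dom_actList (dom_act_self op p) ops).1

end IAnn

namespace PTy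

variable {V Op : Type} [DecidableEq Op]

theorem red_refl (C : PTy V Op) : Red C C := by
  induction C with
  | run X o ι => exact Red.base X o ι
  | par C D ihC ihD => exact Red.par ihC ihD

theorem red_pact_self (op : Op) (C : PTy V Op) : Red C (pact op C) := by
  induction C with
  | run X o ι => exact Red.act X [] op o ι
  | par C D ihC ihD => exact Red.par ihC ihD

theorem red_pact {C D : PTy V Op} (h : Red C D) (op : Op) :
    Red (pact op C) (pact op D) := by
  induction h with
  | base X o ι => exact red_refl _
  | act X ops op' o ι => exact Red.act X (op :: ops) op' o ι
  | par _ _ ihC ihD => exact Red.par ihC ihD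
  | spawnL X o ι Y o' ι' =>
      exact Red.spawnL X (IAnn.act op (o, ι)).1 (IAnn.act op (o, ι)).2
        Y (IAnn.act op (o', ι')).1 (IAnn.act op (o', ι')).2
  | spawnR X o ι Y o' ι' =>
      exact Red.spawnR X (IAnn.act op (o, ι)).1 (IAnn.act op (o, ι)).2
        Y (IAnn.act op (o', ι')).1 (IAnn.act op (o', ι')).2

theorem signalsOf_pact_mono (op : Op) (C : PTy V Op) :
    signalsOf C ⊆ signalsOf (pact op C) := by
  induction C with
  | run X o ι => exact IAnn.fst_act op (o, ι)
  | par C D ihC ihD => exact Set.union_subset_union ihC ihD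

theorem signalsOf_red_mono {C D : PTy V Op} (h : Red C D) :
    signalsOf C ⊆ signalsOf D := by
  induction h with
  | base X o ι => exact subset_rfl
  | act X ops op o ι => exact IAnn.actList_fst_act ops op (o, ι)
  | par _ _ ihC ihD => exact Set.union_subset_union ihC ihD
  | spawnL X o ι Y o' ι' => exact Set.subset_union_left
  | spawnR X o ι Y o' ι' => exact Set.subset_union_right

end PTy

section JointInd
variable {Op : Type} [DecidableEq Op] {sg : Op → VTy Op}

theorem hasVC_ind
    {mV : Ctx Op → Val Op → VTy Op → Prop}
    {mC : Ctx Op → Comp Op → VTy Op → Set Op → IAnn Op → Prop}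
    (hvar : ∀ {Γ : Ctx Op} {n : ℕ} {X : VTy Op} {b : Bool},
      Lookup Γ n X b → (b = true → Mobile X) → mV Γ (.var n) X)
    (hunit : ∀ {Γ : Ctx Op}, mV Γ .unit .unit)
    (hpair : ∀ {Γ : Ctx Op} {V W : Val Op} {X Y : VTy Op},
      HasV sg Γ V X → HasV sg Γ W Y → mV Γ V X → mV Γ W Y → mV Γ (.pair V W) (.prod X Y))
    (hinl : ∀ {Γ : Ctx Op} {V : Val Op} {X Y : VTy Op},
      HasV sg Γ V X → mV Γ V X → mV Γ (.inl V) (.sum X Y))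
    (hinr : ∀ {Γ : Ctx Op} {W : Val Op} {X Y : VTy Op},
      HasV sg Γ W Y → mV Γ W Y → mV Γ (.inr W) (.sum X Y))
    (hlam : ∀ {Γ : Ctx Op} {M : Comp Op} {X Y : VTy Op} {o : Set Op} {ι : IAnn Op},
      HasC sg (CtxE.tyvar X :: Γ) M Y o ι → mC (CtxE.tyvar X :: Γ) M Y o ι →
      mV Γ (.lam M) (.fn X Y o ι))
    (hprom : ∀ {Γ : Ctx Op} {V : Val Op} {X : VTy Op},
      HasV sg Γ V X → mV Γ V X → mV Γ (.prom V) (.prom X))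
    (hbox : ∀ {Γ : Ctx Op} {V : Val Op} {X : VTy Op},
      HasV sg (CtxE.lock :: Γ) V X → mV (CtxE.lock :: Γ) V X → mV Γ (.box V) (.box X))
    (hret : ∀ {Γ : Ctx Op} {V : Val Op} {X : VTy Op} {o : Set Op} {ι : IAnn Op},
      HasV sg Γ V X → mV Γ V X → mC Γ (.ret V) X o ι)
    (hletin : ∀ {Γ : Ctx Op} {M N : Comp Op} {X Y : VTy Op} {o : Set Op} {ι : IAnn Op},
      HasC sg Γ M X o ι → HasC sg (CtxE.tyvar X :: Γ) N Y o ι →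
      mC Γ M X o ι → mC (CtxE.tyvar X :: Γ) N Y o ι → mC Γ (.letin M N) Y o ι)
    (happ : ∀ {Γ : Ctx Op} {V W : Val Op} {X Y : VTy Op} {o : Set Op} {ι : IAnn Op},
      HasV sg Γ V (.fn X Y o ι) → HasV sg Γ W X →
      mV Γ V (.fn X Y o ι) → mV Γ W X → mC Γ (.app V W) Y o ι)
    (hmatchPair : ∀ {Γ : Ctx Op} {V : Val Op} {M : Comp Op} {X Y Z : VTy Op} {o : Set Op} {ι : IAnn Op},
      HasV sg Γ V (.prod X Y) → HasC sg (CtxE.tyvar Y :: CtxE.tyvar X :: Γ) M Z o ι →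
      mV Γ V (.prod X Y) → mC (CtxE.tyvar Y :: CtxE.tyvar X :: Γ) M Z o ι →
      mC Γ (.matchPair V M) Z o ι)
    (hmatchEmpty : ∀ {Γ : Ctx Op} {V : Val Op} {Z : VTy Op} {o : Set Op} {ι : IAnn Op},
      HasV sg Γ V .empty → mV Γ V .empty → mC Γ (.matchEmpty V) Z o ι)
    (hmatchSum : ∀ {Γ : Ctx Op} {V : Val Op} {M N : Comp Op} {X Y Z : VTy Op} {o : Set Op} {ι : IAnn Op},
      HasV sg Γ V (.sum X Y) → HasC sg (CtxE.tyvar X :: Γ) M Z o ι →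
      HasC sg (CtxE.tyvar Y :: Γ) N Z o ι →
      mV Γ V (.sum X Y) → mC (CtxE.tyvar X :: Γ) M Z o ι → mC (CtxE.tyvar Y :: Γ) N Z o ι →
      mC Γ (.matchSum V M N) Z o ι)
    (hsig : ∀ {Γ : Ctx Op} {op : Op} {V : Val Op} {M : Comp Op} {X : VTy Op} {o : Set Op} {ι : IAnn Op},
      op ∈ o → HasV sg Γ V (sg op) → HasC sg Γ M X o ι →
      mV Γ V (sg op) → mC Γ M X o ι → mC Γ (.sig op V M) X o ι)
    (hint : ∀ {Γ : Ctx Op} {op : Op} {V : Val Op} {M : Comp Op} {X : VTy Op} {o : Set Op} {ι : IAnn Op},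
      HasV sg Γ V (sg op) → HasC sg Γ M X o ι →
      mV Γ V (sg op) → mC Γ M X o ι →
      mC Γ (.int op V M) X (IAnn.act op (o, ι)).1 (IAnn.act op (o, ι)).2)
    (hhandler : ∀ {Γ : Ctx Op} {op : Op} {M : Comp Op} {V : Val Op} {N : Comp Op}
      {S X Y : VTy Op} {o : Set Op} {ι : IAnn Op} {o' : Set Op} {ι' : IAnn Op} {o'' : Set Op},
      ι.val [op] = some o'' → o' ⊆ o'' → IAnn.le ι' (ι.subtree op) →
      HasC sg (CtxE.tyvar S :: CtxE.tyvar (.fn S (.prom X) (∅ : Set Op) (IAnn.single op o' ι')) ::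
        CtxE.tyvar (sg op) :: Γ) M (.prom X) o' ι' →
      HasV sg Γ V S → HasC sg (CtxE.tyvar (.prom X) :: Γ) N Y o ι →
      mC (CtxE.tyvar S :: CtxE.tyvar (.fn S (.prom X) (∅ : Set Op) (IAnn.single op o' ι')) ::
        CtxE.tyvar (sg op) :: Γ) M (.prom X) o' ι' →
      mV Γ V S → mC (CtxE.tyvar (.prom X) :: Γ) N Y o ι →
      mC Γ (.handler op M V N) Y o ι)
    (hawait : ∀ {Γ : Ctx Op} {V : Val Op} {M : Comp Op} {X Y : VTy Op} {o : Set Op} {ι : IAnn Op},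
      HasV sg Γ V (.prom X) → HasC sg (CtxE.tyvar X :: Γ) M Y o ι →
      mV Γ V (.prom X) → mC (CtxE.tyvar X :: Γ) M Y o ι → mC Γ (.await V M) Y o ι)
    (hunbox : ∀ {Γ : Ctx Op} {V : Val Op} {M : Comp Op} {X Y : VTy Op} {o : Set Op} {ι : IAnn Op},
      HasV sg Γ V (.box X) → HasC sg (CtxE.tyvar X :: Γ) M Y o ι →
      mV Γ V (.box X) → mC (CtxE.tyvar X :: Γ) M Y o ι → mC Γ (.unbox V M) Y o ι)
    (hspawn : ∀ {Γ : Ctx Op} {M N : Comp Op} {X Y : VTy Op} {o : Set Op} {ι : IAnn Op}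
      {o' : Set Op} {ι' : IAnn Op},
      HasC sg (CtxE.lock :: Γ) M X o ι → HasC sg Γ N Y o' ι' →
      mC (CtxE.lock :: Γ) M X o ι → mC Γ N Y o' ι' → mC Γ (.spawn M N) Y o' ι')
    (hsubsume : ∀ {Γ : Ctx Op} {M : Comp Op} {X : VTy Op} {o : Set Op} {ι : IAnn Op}
      {o' : Set Op} {ι' : IAnn Op},
      HasC sg Γ M X o ι → o ⊆ o' → IAnn.le ι ι' → mC Γ M X o ι → mC Γ M X o' ι') :
    (∀ {Γ V X}, HasV sg Γ V X → mV Γ V X) ∧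
      (∀ {Γ M X o ι}, HasC sg Γ M X o ι → mC Γ M X o ι) := by
  constructor
  · intro Γ V X h
    exact HasV.rec (motive_1 := fun Γ V X _ => mV Γ V X)
      (motive_2 := fun Γ M X o ι _ => mC Γ M X o ι)
      (fun a b => hvar a b) (hunit)
      (fun a b ia ib => hpair a b ia ib)
      (fun a ia => hinl a ia) (fun a ia => hinr a ia)
      (fun a ia => hlam a ia) (fun a ia => hprom a ia) (fun a ia => hbox a ia)
      (fun a ia => hret a ia)
      (fun a b ia ib => hletin a b ia ib)
      (fun a b ia ib => happ a b ia ib)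
      (fun a b ia ib => hmatchPair a b ia ib)
      (fun a ia => hmatchEmpty a ia)
      (fun a b c ia ib ic => hmatchSum a b c ia ib ic)
      (fun a b c ib ic => hsig a b c ib ic)
      (fun a b ia ib => hint a b ia ib)
      (fun a b c d e f id ie if' => hhandler a b c d e f id ie if')
      (fun a b ia ib => hawait a b ia ib)
      (fun a b ia ib => hunbox a b ia ib)
      (fun a b ia ib => hspawn a b ia ib)
      (fun a b c ia => hsubsume a b c ia) h
  · intro Γ M X o ι h
    exact HasC.rec (motive_1 := fun Γ V X _ => mV Γ V X)
      (motive_2 := fun Γ M X o ι _ => mC Γ M X o ι)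
      (fun a b => hvar a b) (hunit)
      (fun a b ia ib => hpair a b ia ib)
      (fun a ia => hinl a ia) (fun a ia => hinr a ia)
      (fun a ia => hlam a ia) (fun a ia => hprom a ia) (fun a ia => hbox a ia)
      (fun a ia => hret a ia)
      (fun a b ia ib => hletin a b ia ib)
      (fun a b ia ib => happ a b ia ib)
      (fun a b ia ib => hmatchPair a b ia ib)
      (fun a ia => hmatchEmpty a ia)
      (fun a b c ia ib ic => hmatchSum a b c ia ib ic)
      (fun a b c ib ic => hsig a b c ib ic)
      (fun a b ia ib => hint a b ia ib)
      (fun a b c d e f id ie if' => hhandler a b c d e f id ie if')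
      (fun a b ia ib => hawait a b ia ib)
      (fun a b ia ib => hunbox a b ia ib)
      (fun a b ia ib => hspawn a b ia ib)
      (fun a b c ia => hsubsume a b c ia) h
end JointInd

section Renaming
variable {Op : Type} [DecidableEq Op] {sg : Op → VTy Op}

/-- Renamings compatible with a pair of contexts. -/
def RenOK (ρ : ℕ → ℕ) (Γ Δ : Ctx Op) : Prop :=
  ∀ n X b, Lookup Γ n X b → ∃ b', Lookup Δ (ρ n) X b' ∧ (b' = true → b = true)

theorem RenOK.lift {ρ : ℕ → ℕ} {Γ Δ : Ctx Op} (h : RenOK ρ Γ Δ) (A : VTy Op) :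
    RenOK (liftR ρ) (CtxE.tyvar A :: Γ) (CtxE.tyvar A :: Δ) := by
  intro n X b hl
  cases hl with
  | here => exact ⟨false, Lookup.here, by simp⟩
  | thereVar hl =>
    obtain ⟨b', hl', hb⟩ := h _ _ _ hl
    exact ⟨b', Lookup.thereVar hl', hb⟩

theorem RenOK.lock {ρ : ℕ → ℕ} {Γ Δ : Ctx Op} (h : RenOK ρ Γ Δ) :
    RenOK ρ (CtxE.lock :: Γ) (CtxE.lock :: Δ) := by
  intro n X b hl
  cases hl with
  | thereLock hl =>
    obtain ⟨b', hl', _⟩ := h _ _ _ hl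
    exact ⟨true, Lookup.thereLock hl', fun _ => rfl⟩

theorem RenOK.succ {Γ : Ctx Op} (A : VTy Op) :
    RenOK Nat.succ Γ (CtxE.tyvar A :: Γ) :=
  fun _ _ b hl => ⟨b, Lookup.thereVar hl, fun hb => hb⟩

theorem RenOK.unlock {Γ : Ctx Op} : RenOK id (CtxE.lock :: Γ) Γ := by
  intro n X b hl
  cases hl with
  | thereLock hl => exact ⟨_, hl, fun _ => rfl⟩

theorem rename_preserves :
    (∀ {Γ : Ctx Op} {V X}, HasV sg Γ V X →
      ∀ {Δ ρ}, RenOK ρ Γ Δ → HasV sg Δ (renameV ρ V) X) ∧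
    (∀ {Γ : Ctx Op} {M X o ι}, HasC sg Γ M X o ι →
      ∀ {Δ ρ}, RenOK ρ Γ Δ → HasC sg Δ (renameC ρ M) X o ι) := by
  apply hasVC_ind
    (mV := fun Γ V X => ∀ {Δ ρ}, RenOK ρ Γ Δ → HasV sg Δ (renameV ρ V) X)
    (mC := fun Γ M X o ι => ∀ {Δ ρ}, RenOK ρ Γ Δ → HasC sg Δ (renameC ρ M) X o ι)
  case hvar =>
    intro Γ n X b hl hm Δ ρ h
    obtain ⟨b', hl', hb⟩ := h _ _ _ hl
    exact HasV.var hl' (fun e => hm (hb e))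
  case hunit => intro _ _ _ _; exact HasV.unit
  case hpair => intro _ _ _ _ _ _ _ ia ib _ _ h; exact HasV.pair (ia h) (ib h)
  case hinl => intro _ _ _ _ _ ia _ _ h; exact HasV.inl (ia h)
  case hinr => intro _ _ _ _ _ ia _ _ h; exact HasV.inr (ia h)
  case hlam => intro _ _ _ _ _ _ _ ia _ _ h; exact HasV.lam (ia (h.lift _))
  case hprom => intro _ _ _ _ ia _ _ h; exact HasV.prom (ia h)
  case hbox => intro _ _ _ _ ia _ _ h; exact HasV.box (ia h.lock)
  case hret => intro _ _ _ _ _ _ ia _ _ h; exact HasC.ret (ia h)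
  case hletin => intro _ _ _ _ _ _ _ _ _ ia ib _ _ h; exact HasC.letin (ia h) (ib (h.lift _))
  case happ => intro _ _ _ _ _ _ _ _ _ ia ib _ _ h; exact HasC.app (ia h) (ib h)
  case hmatchPair =>
    intro _ _ _ _ _ _ _ _ _ _ ia ib _ _ h
    exact HasC.matchPair (ia h) (ib ((h.lift _).lift _))
  case hmatchEmpty => intro _ _ _ _ _ _ ia _ _ h; exact HasC.matchEmpty (ia h)
  case hmatchSum =>
    intro _ _ _ _ _ _ _ _ _ _ _ _ ia ib ic _ _ h
    exact HasC.matchSum (ia h) (ib (h.lift _)) (ic (h.lift _))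
  case hsig => intro _ _ _ _ _ _ _ hmem _ _ ia ib _ _ h; exact HasC.sig hmem (ia h) (ib h)
  case hint => intro _ _ _ _ _ _ _ _ _ ia ib _ _ h; exact HasC.int (ia h) (ib h)
  case hhandler =>
    intro _ _ _ _ _ _ _ _ _ _ _ _ _ e1 e2 e3 _ _ _ id ie if' _ _ h
    exact HasC.handler e1 e2 e3 (id (((h.lift _).lift _).lift _)) (ie h) (if' (h.lift _))
  case hawait => intro _ _ _ _ _ _ _ _ _ ia ib _ _ h; exact HasC.await (ia h) (ib (h.lift _))
  case hunbox => intro _ _ _ _ _ _ _ _ _ ia ib _ _ h; exact HasC.unbox (ia h) (ib (h.lift _))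
  case hspawn => intro _ _ _ _ _ _ _ _ _ _ _ ia ib _ _ h; exact HasC.spawn (ia h.lock) (ib h)
  case hsubsume => intro _ _ _ _ _ _ _ _ hs1 hs2 ia _ _ h; exact HasC.subsume (ia h) hs1 hs2

theorem renameV_ty {Γ Δ : Ctx Op} {ρ V X} (h : HasV sg Γ V X) (hr : RenOK ρ Γ Δ) :
    HasV sg Δ (renameV ρ V) X := rename_preserves.1 h hr

theorem renameC_ty {Γ Δ : Ctx Op} {ρ M X o ι} (h : HasC sg Γ M X o ι) (hr : RenOK ρ Γ Δ) :
    HasC sg Δ (renameC ρ M) X o ι := rename_preserves.2 h hr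

end Renaming

theorem liftR_id : liftR id = id := by
  funext n; cases n <;> rfl

mutual
theorem renameV_id {Op : Type} (V : Val Op) : renameV id V = V := by
  cases V with
  | var n => rfl
  | unit => rfl
  | pair a b => simp [renameV, renameV_id a, renameV_id b]
  | inl a => simp [renameV, renameV_id a]
  | inr a => simp [renameV, renameV_id a]
  | lam m => simp [renameV, liftR_id, renameC_id m]
  | prom a => simp [renameV, renameV_id a]
  | box a => simp [renameV, renameV_id a]

theorem renameC_id {Op : Type} (M : Comp Op) : renameC id M = M := by
  cases M with
  | ret v => simp [renameC, renameV_id v]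
  | letin m n => simp [renameC, liftR_id, renameC_id m, renameC_id n]
  | app v w => simp [renameC, renameV_id v, renameV_id w]
  | matchPair v m => simp [renameC, liftR_id, renameV_id v, renameC_id m]
  | matchEmpty v => simp [renameC, renameV_id v]
  | matchSum v m n => simp [renameC, liftR_id, renameV_id v, renameC_id m, renameC_id n]
  | sig op v m => simp [renameC, renameV_id v, renameC_id m]
  | int op v m => simp [renameC, renameV_id v, renameC_id m]
  | handler op m v n =>
      simp [renameC, liftR_id, renameC_id m, renameV_id v, renameC_id n]
  | await v m => simp [renameC, liftR_id, renameV_id v, renameC_id m]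
  | unbox v m => simp [renameC, liftR_id, renameV_id v, renameC_id m]
  | spawn m n => simp [renameC, renameC_id m, renameC_id n]
end

section Unlock
variable {Op : Type} [DecidableEq Op] {sg : Op → VTy Op}

theorem unlockC {Γ : Ctx Op} {M X o ι} (h : HasC sg (CtxE.lock :: Γ) M X o ι) :
    HasC sg Γ M X o ι := by
  have := renameC_ty h RenOK.unlock
  rwa [renameC_id] at this

theorem unlockV {Γ : Ctx Op} {V X} (h : HasV sg (CtxE.lock :: Γ) V X) :
    HasV sg Γ V X := by
  have := renameV_ty h RenOK.unlock
  rwa [renameV_id] at this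

end Unlock

section LockIns
variable {Op : Type} [DecidableEq Op] {sg : Op → VTy Op}

theorem lookup_insert_lock (Δ₁ : Ctx Op) {Δ₂ : Ctx Op} {n X b}
    (h : Lookup (Δ₁ ++ Δ₂) n X b) :
    ∃ b', Lookup (Δ₁ ++ CtxE.lock :: Δ₂) n X b' ∧
      (b' = true → b = true ∨ CtxE.lock ∉ Δ₁) := by
  induction Δ₁ generalizing n b with
  | nil => exact ⟨true, Lookup.thereLock h, fun _ => Or.inr (by simp)⟩
  | cons e Δ₁ ih =>
    cases e with
    | tyvar Y =>
      cases h with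
      | here => exact ⟨false, Lookup.here, by simp⟩
      | thereVar h =>
        obtain ⟨b', h', hb⟩ := ih h
        refine ⟨b', Lookup.thereVar h', fun e => ?_⟩
        rcases hb e with h | h
        · exact Or.inl h
        · exact Or.inr (by simpa using h)
    | lock =>
      cases h with
      | thereLock h =>
        obtain ⟨b', h', _⟩ := ih h
        exact ⟨true, Lookup.thereLock h', fun _ => Or.inl rfl⟩

theorem insert_lock :
    (∀ {Γ : Ctx Op} {V X}, HasV sg Γ V X →
      ∀ Δ₁ Δ₂, Γ = Δ₁ ++ Δ₂ → (Mobile X ∨ CtxE.lock ∈ Δ₁) →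
        HasV sg (Δ₁ ++ CtxE.lock :: Δ₂) V X) ∧
    (∀ {Γ : Ctx Op} {M X o ι}, HasC sg Γ M X o ι →
      ∀ Δ₁ Δ₂, Γ = Δ₁ ++ Δ₂ → CtxE.lock ∈ Δ₁ →
        HasC sg (Δ₁ ++ CtxE.lock :: Δ₂) M X o ι) := by
  apply hasVC_ind
    (mV := fun Γ V X => ∀ Δ₁ Δ₂, Γ = Δ₁ ++ Δ₂ → (Mobile X ∨ CtxE.lock ∈ Δ₁) →
        HasV sg (Δ₁ ++ CtxE.lock :: Δ₂) V X)
    (mC := fun Γ M X o ι => ∀ Δ₁ Δ₂, Γ = Δ₁ ++ Δ₂ → CtxE.lock ∈ Δ₁ →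
        HasC sg (Δ₁ ++ CtxE.lock :: Δ₂) M X o ι)
  case hvar =>
    intro Γ n X b hl hm Δ₁ Δ₂ he hmob
    subst he
    obtain ⟨b', hl', hb⟩ := lookup_insert_lock Δ₁ hl
    refine HasV.var hl' (fun e => ?_)
    rcases hb e with h | h
    · exact hm h
    · rcases hmob with h' | h'
      · exact h'
      · exact absurd h' h
  case hunit => intro _ _ _ _ _; exact HasV.unit
  case hpair =>
    intro Γ V W X Y hV hW ia ib Δ₁ Δ₂ he hmob
    have hx : Mobile X ∨ CtxE.lock ∈ Δ₁ := by
      rcases hmob with h | h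
      · cases h with | prod h1 _ => exact Or.inl h1
      · exact Or.inr h
    have hy : Mobile Y ∨ CtxE.lock ∈ Δ₁ := by
      rcases hmob with h | h
      · cases h with | prod _ h2 => exact Or.inl h2
      · exact Or.inr h
    exact HasV.pair (ia _ _ he hx) (ib _ _ he hy)
  case hinl =>
    intro _ _ _ _ _ ia Δ₁ Δ₂ he hmob
    refine HasV.inl (ia _ _ he ?_)
    rcases hmob with h | h
    · cases h with | sum h1 h2 => exact Or.inl h1
    · exact Or.inr h
  case hinr =>
    intro _ _ _ _ _ ia Δ₁ Δ₂ he hmob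
    refine HasV.inr (ia _ _ he ?_)
    rcases hmob with h | h
    · cases h with | sum h1 h2 => exact Or.inl h2
    · exact Or.inr h
  case hlam =>
    intro _ _ _ _ _ _ _ ia Δ₁ Δ₂ he hmob
    rcases hmob with h | h
    · cases h
    · subst he
      exact HasV.lam (ia (CtxE.tyvar _ :: Δ₁) _ rfl (by simp [h]))
  case hprom =>
    intro _ _ _ _ ia Δ₁ Δ₂ he hmob
    rcases hmob with h | h
    · cases h
    · exact HasV.prom (ia _ _ he (Or.inr h))
  case hbox =>
    intro _ _ _ _ ia Δ₁ Δ₂ he hmob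
    subst he
    exact HasV.box (ia (CtxE.lock :: Δ₁) _ rfl (Or.inr (by simp)))
  case hret => intro _ _ _ _ _ _ ia Δ₁ Δ₂ he hm; exact HasC.ret (ia _ _ he (Or.inr hm))
  case hletin =>
    intro _ _ _ _ _ _ _ _ _ ia ib Δ₁ Δ₂ he hm
    subst he
    exact HasC.letin (ia _ _ rfl hm) (ib (CtxE.tyvar _ :: Δ₁) _ rfl (by simp [hm]))
  case happ =>
    intro _ _ _ _ _ _ _ _ _ ia ib Δ₁ Δ₂ he hm
    exact HasC.app (ia _ _ he (Or.inr hm)) (ib _ _ he (Or.inr hm))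
  case hmatchPair =>
    intro _ _ _ _ _ _ _ _ _ _ ia ib Δ₁ Δ₂ he hm
    subst he
    exact HasC.matchPair (ia _ _ rfl (Or.inr hm))
      (ib (CtxE.tyvar _ :: CtxE.tyvar _ :: Δ₁) _ rfl (by simp [hm]))
  case hmatchEmpty =>
    intro _ _ _ _ _ _ ia Δ₁ Δ₂ he hm
    exact HasC.matchEmpty (ia _ _ he (Or.inr hm))
  case hmatchSum =>
    intro _ _ _ _ _ _ _ _ _ _ _ _ ia ib ic Δ₁ Δ₂ he hm
    subst he
    exact HasC.matchSum (ia _ _ rfl (Or.inr hm))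
      (ib (CtxE.tyvar _ :: Δ₁) _ rfl (by simp [hm]))
      (ic (CtxE.tyvar _ :: Δ₁) _ rfl (by simp [hm]))
  case hsig =>
    intro _ _ _ _ _ _ _ hmem _ _ ia ib Δ₁ Δ₂ he hm
    exact HasC.sig hmem (ia _ _ he (Or.inr hm)) (ib _ _ he hm)
  case hint =>
    intro _ _ _ _ _ _ _ _ _ ia ib Δ₁ Δ₂ he hm
    exact HasC.int (ia _ _ he (Or.inr hm)) (ib _ _ he hm)
  case hhandler =>
    intro _ _ _ _ _ _ _ _ _ _ _ _ _ e1 e2 e3 _ _ _ id ie if' Δ₁ Δ₂ he hm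
    subst he
    exact HasC.handler e1 e2 e3
      (id (CtxE.tyvar _ :: CtxE.tyvar _ :: CtxE.tyvar _ :: Δ₁) _ rfl (by simp [hm]))
      (ie _ _ rfl (Or.inr hm))
      (if' (CtxE.tyvar _ :: Δ₁) _ rfl (by simp [hm]))
  case hawait =>
    intro _ _ _ _ _ _ _ _ _ ia ib Δ₁ Δ₂ he hm
    subst he
    exact HasC.await (ia _ _ rfl (Or.inr hm)) (ib (CtxE.tyvar _ :: Δ₁) _ rfl (by simp [hm]))
  case hunbox =>
    intro _ _ _ _ _ _ _ _ _ ia ib Δ₁ Δ₂ he hm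
    subst he
    exact HasC.unbox (ia _ _ rfl (Or.inr hm)) (ib (CtxE.tyvar _ :: Δ₁) _ rfl (by simp [hm]))
  case hspawn =>
    intro _ _ _ _ _ _ _ _ _ _ _ ia ib Δ₁ Δ₂ he hm
    subst he
    exact HasC.spawn (ia (CtxE.lock :: Δ₁) _ rfl (by simp)) (ib _ _ rfl hm)
  case hsubsume =>
    intro _ _ _ _ _ _ _ _ hs1 hs2 ia Δ₁ Δ₂ he hm
    exact HasC.subsume (ia _ _ he hm) hs1 hs2

theorem mobile_lock_front {Γ : Ctx Op} {V X} (hm : Mobile X) (h : HasV sg Γ V X) :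
    HasV sg (CtxE.lock :: Γ) V X :=
  insert_lock.1 h [] Γ rfl (Or.inl hm)

end LockIns

section Subst
variable {Op : Type} [DecidableEq Op] {sg : Op → VTy Op}

/-- Substitutions compatible with a pair of contexts. -/
def SubOK (sg : Op → VTy Op) [DecidableEq Op] (σ : ℕ → Val Op) (Γ Δ : Ctx Op) : Prop :=
  ∀ n X b, Lookup Γ n X b → (b = true → Mobile X) → HasV sg Δ (σ n) X

theorem SubOK.lift {σ : ℕ → Val Op} {Γ Δ : Ctx Op} (h : SubOK sg σ Γ Δ) (A : VTy Op) :
    SubOK sg (liftS σ) (CtxE.tyvar A :: Γ) (CtxE.tyvar A :: Δ) := by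
  intro n X b hl hm
  cases hl with
  | here => exact HasV.var Lookup.here (by simp)
  | thereVar hl => exact renameV_ty (h _ _ _ hl hm) (RenOK.succ A)

theorem SubOK.lock {σ : ℕ → Val Op} {Γ Δ : Ctx Op} (h : SubOK sg σ Γ Δ) :
    SubOK sg σ (CtxE.lock :: Γ) (CtxE.lock :: Δ) := by
  intro n X b hl hm
  cases hl with
  | thereLock hl =>
    have hmx : Mobile X := hm rfl
    exact mobile_lock_front hmx (h _ _ _ hl (fun _ => hmx))

theorem subst_preserves :
    (∀ {Γ : Ctx Op} {V X}, HasV sg Γ V X →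
      ∀ {Δ σ}, SubOK sg σ Γ Δ → HasV sg Δ (substV σ V) X) ∧
    (∀ {Γ : Ctx Op} {M X o ι}, HasC sg Γ M X o ι →
      ∀ {Δ σ}, SubOK sg σ Γ Δ → HasC sg Δ (substC σ M) X o ι) := by
  apply hasVC_ind
    (mV := fun Γ V X => ∀ {Δ σ}, SubOK sg σ Γ Δ → HasV sg Δ (substV σ V) X)
    (mC := fun Γ M X o ι => ∀ {Δ σ}, SubOK sg σ Γ Δ → HasC sg Δ (substC σ M) X o ι)
  case hvar => intro Γ n X b hl hm Δ σ h; exact h _ _ _ hl hm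
  case hunit => intro _ _ _ _; exact HasV.unit
  case hpair => intro _ _ _ _ _ _ _ ia ib _ _ h; exact HasV.pair (ia h) (ib h)
  case hinl => intro _ _ _ _ _ ia _ _ h; exact HasV.inl (ia h)
  case hinr => intro _ _ _ _ _ ia _ _ h; exact HasV.inr (ia h)
  case hlam => intro _ _ _ _ _ _ _ ia _ _ h; exact HasV.lam (ia (h.lift _))
  case hprom => intro _ _ _ _ ia _ _ h; exact HasV.prom (ia h)
  case hbox => intro _ _ _ _ ia _ _ h; exact HasV.box (ia h.lock)
  case hret => intro _ _ _ _ _ _ ia _ _ h; exact HasC.ret (ia h)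
  case hletin => intro _ _ _ _ _ _ _ _ _ ia ib _ _ h; exact HasC.letin (ia h) (ib (h.lift _))
  case happ => intro _ _ _ _ _ _ _ _ _ ia ib _ _ h; exact HasC.app (ia h) (ib h)
  case hmatchPair =>
    intro _ _ _ _ _ _ _ _ _ _ ia ib _ _ h
    exact HasC.matchPair (ia h) (ib ((h.lift _).lift _))
  case hmatchEmpty => intro _ _ _ _ _ _ ia _ _ h; exact HasC.matchEmpty (ia h)
  case hmatchSum =>
    intro _ _ _ _ _ _ _ _ _ _ _ _ ia ib ic _ _ h
    exact HasC.matchSum (ia h) (ib (h.lift _)) (ic (h.lift _))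
  case hsig => intro _ _ _ _ _ _ _ hmem _ _ ia ib _ _ h; exact HasC.sig hmem (ia h) (ib h)
  case hint => intro _ _ _ _ _ _ _ _ _ ia ib _ _ h; exact HasC.int (ia h) (ib h)
  case hhandler =>
    intro _ _ _ _ _ _ _ _ _ _ _ _ _ e1 e2 e3 _ _ _ id ie if' _ _ h
    exact HasC.handler e1 e2 e3 (id (((h.lift _).lift _).lift _)) (ie h) (if' (h.lift _))
  case hawait => intro _ _ _ _ _ _ _ _ _ ia ib _ _ h; exact HasC.await (ia h) (ib (h.lift _))
  case hunbox => intro _ _ _ _ _ _ _ _ _ ia ib _ _ h; exact HasC.unbox (ia h) (ib (h.lift _))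
  case hspawn => intro _ _ _ _ _ _ _ _ _ _ _ ia ib _ _ h; exact HasC.spawn (ia h.lock) (ib h)
  case hsubsume => intro _ _ _ _ _ _ _ _ hs1 hs2 ia _ _ h; exact HasC.subsume (ia h) hs1 hs2

theorem substC_ty {Γ Δ : Ctx Op} {σ M X o ι} (h : HasC sg Γ M X o ι)
    (hs : SubOK sg σ Γ Δ) : HasC sg Δ (substC σ M) X o ι := subst_preserves.2 h hs

theorem sub1_ok {Γ : Ctx Op} {V : Val Op} {X : VTy Op} (hV : HasV sg Γ V X) :
    SubOK sg (sub1 V) (CtxE.tyvar X :: Γ) Γ := by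
  intro n Y b hl hm
  cases hl with
  | here => exact hV
  | thereVar hl => exact HasV.var hl hm

theorem sub2_ok {Γ : Ctx Op} {V W : Val Op} {X Y : VTy Op}
    (hV : HasV sg Γ V X) (hW : HasV sg Γ W Y) :
    SubOK sg (sub2 V W) (CtxE.tyvar Y :: CtxE.tyvar X :: Γ) Γ := by
  intro n Z b hl hm
  cases hl with
  | here => exact hW
  | thereVar hl =>
    cases hl with
    | here => exact hV
    | thereVar hl => exact HasV.var hl hm

theorem sub3_ok {Γ : Ctx Op} {V R W : Val Op} {X Y Z : VTy Op}
    (hV : HasV sg Γ V X) (hR : HasV sg Γ R Y) (hW : HasV sg Γ W Z) :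
    SubOK sg (sub3 V R W) (CtxE.tyvar Z :: CtxE.tyvar Y :: CtxE.tyvar X :: Γ) Γ := by
  intro n A b hl hm
  cases hl with
  | here => exact hW
  | thereVar hl =>
    cases hl with
    | here => exact hR
    | thereVar hl =>
      cases hl with
      | here => exact hV
      | thereVar hl => exact HasV.var hl hm

end Subst

section AntiRename
variable {Op : Type} [DecidableEq Op] {sg : Op → VTy Op}

def AntiOK (ρ : ℕ → ℕ) (Γ Δ : Ctx Op) : Prop :=
  ∀ n X b, Lookup Δ (ρ n) X b → ∃ b', Lookup Γ n X b' ∧ (b' = true → b = true)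

theorem AntiOK.lift {ρ : ℕ → ℕ} {Γ Δ : Ctx Op} (h : AntiOK ρ Γ Δ) (A : VTy Op) :
    AntiOK (liftR ρ) (CtxE.tyvar A :: Γ) (CtxE.tyvar A :: Δ) := by
  intro n X b hl
  cases n with
  | zero =>
    cases hl with
    | here => exact ⟨false, Lookup.here, by simp⟩
  | succ n =>
    cases hl with
    | thereVar hl =>
      obtain ⟨b', hl', hb⟩ := h _ _ _ hl
      exact ⟨b', Lookup.thereVar hl', hb⟩

theorem AntiOK.lock {ρ : ℕ → ℕ} {Γ Δ : Ctx Op} (h : AntiOK ρ Γ Δ) :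
    AntiOK ρ (CtxE.lock :: Γ) (CtxE.lock :: Δ) := by
  intro n X b hl
  cases hl with
  | thereLock hl =>
    obtain ⟨b', hl', _⟩ := h _ _ _ hl
    exact ⟨true, Lookup.thereLock hl', fun _ => rfl⟩

theorem AntiOK.succ {Γ : Ctx Op} (A : VTy Op) :
    AntiOK Nat.succ Γ (CtxE.tyvar A :: Γ) := by
  intro n X b hl
  cases hl with
  | thereVar hl => exact ⟨b, hl, fun e => e⟩

theorem anti_rename :
    (∀ {Δ : Ctx Op} {V' X}, HasV sg Δ V' X →
      ∀ Γ ρ V, V' = renameV ρ V → AntiOK ρ Γ Δ → HasV sg Γ V X) ∧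
    (∀ {Δ : Ctx Op} {M' X o ι}, HasC sg Δ M' X o ι →
      ∀ Γ ρ M, M' = renameC ρ M → AntiOK ρ Γ Δ → HasC sg Γ M X o ι) := by
  apply hasVC_ind
    (mV := fun Δ V' X => ∀ Γ ρ V, V' = renameV ρ V → AntiOK ρ Γ Δ → HasV sg Γ V X)
    (mC := fun Δ M' X o ι => ∀ Γ ρ M, M' = renameC ρ M → AntiOK ρ Γ Δ → HasC sg Γ M X o ι)
  case hvar =>
    intro Δ k X b hl hm Γ ρ V e h
    cases V <;> simp [renameV] at e
    subst e
    obtain ⟨b', hl', hb⟩ := h _ _ _ hl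
    exact HasV.var hl' (fun e => hm (hb e))
  case hunit =>
    intro Δ Γ ρ V e h
    cases V <;> simp [renameV] at e
    exact HasV.unit
  case hpair =>
    intro Δ a b X Y ha hb ia ib Γ ρ V e h
    cases V <;> simp [renameV] at e
    obtain ⟨e1, e2⟩ := e
    exact HasV.pair (ia _ _ _ e1 h) (ib _ _ _ e2 h)
  case hinl =>
    intro Δ a X Y ha ia Γ ρ V e h
    cases V <;> simp [renameV] at e
    exact HasV.inl (ia _ _ _ e h)
  case hinr =>
    intro Δ a X Y ha ia Γ ρ V e h
    cases V <;> simp [renameV] at e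
    exact HasV.inr (ia _ _ _ e h)
  case hlam =>
    intro Δ m X Y o ι hm ia Γ ρ V e h
    cases V <;> simp [renameV] at e
    exact HasV.lam (ia _ _ _ e (h.lift _))
  case hprom =>
    intro Δ a X ha ia Γ ρ V e h
    cases V <;> simp [renameV] at e
    exact HasV.prom (ia _ _ _ e h)
  case hbox =>
    intro Δ a X ha ia Γ ρ V e h
    cases V <;> simp [renameV] at e
    exact HasV.box (ia _ _ _ e h.lock)
  case hret =>
    intro Δ v X o ι hv ia Γ ρ M e h
    cases M <;> simp [renameC] at e
    exact HasC.ret (ia _ _ _ e h)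
  case hletin =>
    intro Δ m n X Y o ι hm hn ia ib Γ ρ M e h
    cases M <;> simp [renameC] at e
    obtain ⟨e1, e2⟩ := e
    exact HasC.letin (ia _ _ _ e1 h) (ib _ _ _ e2 (h.lift _))
  case happ =>
    intro Δ v w X Y o ι hv hw ia ib Γ ρ M e h
    cases M <;> simp [renameC] at e
    obtain ⟨e1, e2⟩ := e
    exact HasC.app (ia _ _ _ e1 h) (ib _ _ _ e2 h)
  case hmatchPair =>
    intro Δ v m X Y Z o ι hv hm ia ib Γ ρ M e h
    cases M <;> simp [renameC] at e
    obtain ⟨e1, e2⟩ := e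
    exact HasC.matchPair (ia _ _ _ e1 h) (ib _ _ _ e2 ((h.lift _).lift _))
  case hmatchEmpty =>
    intro Δ v Z o ι hv ia Γ ρ M e h
    cases M <;> simp [renameC] at e
    exact HasC.matchEmpty (ia _ _ _ e h)
  case hmatchSum =>
    intro Δ v m n X Y Z o ι hv hm hn ia ib ic Γ ρ M e h
    cases M <;> simp [renameC] at e
    obtain ⟨e1, e2, e3⟩ := e
    exact HasC.matchSum (ia _ _ _ e1 h) (ib _ _ _ e2 (h.lift _)) (ic _ _ _ e3 (h.lift _))
  case hsig =>
    intro Δ op v m X o ι hmem hv hm ia ib Γ ρ M e h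
    cases M <;> simp [renameC] at e
    obtain ⟨e0, e1, e2⟩ := e
    subst e0
    exact HasC.sig hmem (ia _ _ _ e1 h) (ib _ _ _ e2 h)
  case hint =>
    intro Δ op v m X o ι hv hm ia ib Γ ρ M e h
    cases M <;> simp [renameC] at e
    obtain ⟨e0, e1, e2⟩ := e
    subst e0
    exact HasC.int (ia _ _ _ e1 h) (ib _ _ _ e2 h)
  case hhandler =>
    intro Δ op m v n S X Y o ι o' ι' o'' c1 c2 c3 hm hv hn ia ib ic Γ ρ M e h
    cases M <;> simp [renameC] at e
    obtain ⟨e0, e1, e2, e3⟩ := e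
    subst e0
    exact HasC.handler c1 c2 c3 (ia _ _ _ e1 (((h.lift _).lift _).lift _))
      (ib _ _ _ e2 h) (ic _ _ _ e3 (h.lift _))
  case hawait =>
    intro Δ v m X Y o ι hv hm ia ib Γ ρ M e h
    cases M <;> simp [renameC] at e
    obtain ⟨e1, e2⟩ := e
    exact HasC.await (ia _ _ _ e1 h) (ib _ _ _ e2 (h.lift _))
  case hunbox =>
    intro Δ v m X Y o ι hv hm ia ib Γ ρ M e h
    cases M <;> simp [renameC] at e
    obtain ⟨e1, e2⟩ := e
    exact HasC.unbox (ia _ _ _ e1 h) (ib _ _ _ e2 (h.lift _))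
  case hspawn =>
    intro Δ m n X Y o ι o' ι' hm hn ia ib Γ ρ M e h
    cases M <;> simp [renameC] at e
    obtain ⟨e1, e2⟩ := e
    exact HasC.spawn (ia _ _ _ e1 h.lock) (ib _ _ _ e2 h)
  case hsubsume =>
    intro Δ m X o ι o' ι' hm hs1 hs2 ia Γ ρ M e h
    exact HasC.subsume (ia _ _ _ e h) hs1 hs2

theorem strengthenV {Γ : Ctx Op} {A : VTy Op} {W X}
    (h : HasV sg (CtxE.tyvar A :: Γ) (renameV Nat.succ W) X) : HasV sg Γ W X :=
  anti_rename.1 h Γ Nat.succ W rfl (AntiOK.succ A)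

theorem strengthenC {Γ : Ctx Op} {A : VTy Op} {N X o ι}
    (h : HasC sg (CtxE.tyvar A :: Γ) (renameC Nat.succ N) X o ι) : HasC sg Γ N X o ι :=
  anti_rename.2 h Γ Nat.succ N rfl (AntiOK.succ A)

end AntiRename

section Inversion
variable {Op : Type} [DecidableEq Op]

/-- Head derivations: the last rule is not subsumption. -/
inductive HasCHead (sg : Op → VTy Op) :
    Ctx Op → Comp Op → VTy Op → Set Op → IAnn Op → Prop where
  | ret {Γ V X o ι} : HasV sg Γ V X → HasCHead sg Γ (.ret V) X o ι
  | letin {Γ M N X Y o ι} : HasC sg Γ M X o ι →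
      HasC sg (CtxE.tyvar X :: Γ) N Y o ι → HasCHead sg Γ (.letin M N) Y o ι
  | app {Γ V W X Y o ι} : HasV sg Γ V (.fn X Y o ι) → HasV sg Γ W X →
      HasCHead sg Γ (.app V W) Y o ι
  | matchPair {Γ V M X Y Z o ι} : HasV sg Γ V (.prod X Y) →
      HasC sg (CtxE.tyvar Y :: CtxE.tyvar X :: Γ) M Z o ι →
      HasCHead sg Γ (.matchPair V M) Z o ι
  | matchEmpty {Γ V Z o ι} : HasV sg Γ V .empty →
      HasCHead sg Γ (.matchEmpty V) Z o ι
  | matchSum {Γ V M N X Y Z o ι} : HasV sg Γ V (.sum X Y) →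
      HasC sg (CtxE.tyvar X :: Γ) M Z o ι →
      HasC sg (CtxE.tyvar Y :: Γ) N Z o ι →
      HasCHead sg Γ (.matchSum V M N) Z o ι
  | sig {Γ op V M X o ι} : op ∈ o → HasV sg Γ V (sg op) →
      HasC sg Γ M X o ι → HasCHead sg Γ (.sig op V M) X o ι
  | int {Γ op V M X o ι} : HasV sg Γ V (sg op) → HasC sg Γ M X o ι →
      HasCHead sg Γ (.int op V M) X (IAnn.act op (o, ι)).1 (IAnn.act op (o, ι)).2
  | handler {Γ op M V N S X Y o ι o' ι' o''} :
      ι.val [op] = some o'' → o' ⊆ o'' → IAnn.le ι' (ι.subtree op) →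
      HasC sg (CtxE.tyvar S ::
               CtxE.tyvar (.fn S (.prom X) (∅ : Set Op) (IAnn.single op o' ι')) ::
               CtxE.tyvar (sg op) :: Γ) M (.prom X) o' ι' →
      HasV sg Γ V S →
      HasC sg (CtxE.tyvar (.prom X) :: Γ) N Y o ι →
      HasCHead sg Γ (.handler op M V N) Y o ι
  | await {Γ V M X Y o ι} : HasV sg Γ V (.prom X) →
      HasC sg (CtxE.tyvar X :: Γ) M Y o ι → HasCHead sg Γ (.await V M) Y o ι
  | unbox {Γ V M X Y o ι} : HasV sg Γ V (.box X) →
      HasC sg (CtxE.tyvar X :: Γ) M Y o ι → HasCHead sg Γ (.unbox V M) Y o ι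
  | spawn {Γ M N X Y o ι o' ι'} : HasC sg (CtxE.lock :: Γ) M X o ι →
      HasC sg Γ N Y o' ι' → HasCHead sg Γ (.spawn M N) Y o' ι'

variable {sg : Op → VTy Op}

theorem strip_subsume {Γ : Ctx Op} {M X o ι} (h : HasC sg Γ M X o ι) :
    ∃ o₀ ι₀, o₀ ⊆ o ∧ IAnn.le ι₀ ι ∧ HasCHead sg Γ M X o₀ ι₀ := by
  revert Γ M X o ι
  have := hasVC_ind (sg := sg) (mV := fun _ _ _ => True)
    (mC := fun Γ M X o ι => ∃ o₀ ι₀, o₀ ⊆ o ∧ IAnn.le ι₀ ι ∧ HasCHead sg Γ M X o₀ ι₀)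
    (fun _ _ => trivial) trivial (fun _ _ _ _ => trivial) (fun _ _ => trivial)
    (fun _ _ => trivial) (fun _ _ => trivial) (fun _ _ => trivial) (fun _ _ => trivial)
    -- ret
    (fun hv _ => ⟨_, _, subset_rfl, IAnn.le_refl _, HasCHead.ret hv⟩)
    -- letin
    (fun a b _ _ => ⟨_, _, subset_rfl, IAnn.le_refl _, HasCHead.letin a b⟩)
    -- app
    (fun a b _ _ => ⟨_, _, subset_rfl, IAnn.le_refl _, HasCHead.app a b⟩)
    -- matchPair
    (fun a b _ _ => ⟨_, _, subset_rfl, IAnn.le_refl _, HasCHead.matchPair a b⟩)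
    -- matchEmpty
    (fun a _ => ⟨_, _, subset_rfl, IAnn.le_refl _, HasCHead.matchEmpty a⟩)
    -- matchSum
    (fun a b c _ _ _ => ⟨_, _, subset_rfl, IAnn.le_refl _, HasCHead.matchSum a b c⟩)
    -- sig
    (fun m a b _ _ => ⟨_, _, subset_rfl, IAnn.le_refl _, HasCHead.sig m a b⟩)
    -- int
    (fun a b _ _ => ⟨_, _, subset_rfl, IAnn.le_refl _, HasCHead.int a b⟩)
    -- handler
    (fun c1 c2 c3 a b c _ _ _ => ⟨_, _, subset_rfl, IAnn.le_refl _, HasCHead.handler c1 c2 c3 a b c⟩)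
    -- await
    (fun a b _ _ => ⟨_, _, subset_rfl, IAnn.le_refl _, HasCHead.await a b⟩)
    -- unbox
    (fun a b _ _ => ⟨_, _, subset_rfl, IAnn.le_refl _, HasCHead.unbox a b⟩)
    -- spawn
    (fun a b _ _ => ⟨_, _, subset_rfl, IAnn.le_refl _, HasCHead.spawn a b⟩)
    -- subsume
    (fun _ hs1 hs2 ih => by
      obtain ⟨o₀, ι₀, h1, h2, hh⟩ := ih
      exact ⟨o₀, ι₀, h1.trans hs1, IAnn.le_trans h2 hs2, hh⟩)
  intro Γ M X o ι h
  exact this.2 h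

theorem inv_ret {Γ : Ctx Op} {V X o ι} (h : HasC sg Γ (.ret V) X o ι) :
    HasV sg Γ V X := by
  obtain ⟨o₀, ι₀, _, _, hh⟩ := strip_subsume h
  cases hh with | ret hv => exact hv

theorem inv_letin {Γ : Ctx Op} {M N Y o ι} (h : HasC sg Γ (.letin M N) Y o ι) :
    ∃ X, HasC sg Γ M X o ι ∧ HasC sg (CtxE.tyvar X :: Γ) N Y o ι := by
  obtain ⟨o₀, ι₀, h1, h2, hh⟩ := strip_subsume h
  cases hh with
  | letin a b => exact ⟨_, a.subsume h1 h2, b.subsume h1 h2⟩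

theorem inv_app {Γ : Ctx Op} {V W Y o ι} (h : HasC sg Γ (.app V W) Y o ι) :
    ∃ X o₀ ι₀, o₀ ⊆ o ∧ IAnn.le ι₀ ι ∧ HasV sg Γ V (.fn X Y o₀ ι₀) ∧ HasV sg Γ W X := by
  obtain ⟨o₀, ι₀, h1, h2, hh⟩ := strip_subsume h
  cases hh with
  | app a b => exact ⟨_, _, _, h1, h2, a, b⟩

theorem inv_matchPair {Γ : Ctx Op} {V M Z o ι} (h : HasC sg Γ (.matchPair V M) Z o ι) :
    ∃ X Y, HasV sg Γ V (.prod X Y) ∧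
      HasC sg (CtxE.tyvar Y :: CtxE.tyvar X :: Γ) M Z o ι := by
  obtain ⟨o₀, ι₀, h1, h2, hh⟩ := strip_subsume h
  cases hh with
  | matchPair a b => exact ⟨_, _, a, b.subsume h1 h2⟩

theorem inv_matchSum {Γ : Ctx Op} {V M N Z o ι} (h : HasC sg Γ (.matchSum V M N) Z o ι) :
    ∃ X Y, HasV sg Γ V (.sum X Y) ∧ HasC sg (CtxE.tyvar X :: Γ) M Z o ι ∧
      HasC sg (CtxE.tyvar Y :: Γ) N Z o ι := by
  obtain ⟨o₀, ι₀, h1, h2, hh⟩ := strip_subsume h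
  cases hh with
  | matchSum a b c => exact ⟨_, _, a, b.subsume h1 h2, c.subsume h1 h2⟩

theorem inv_sig {Γ : Ctx Op} {op V M X o ι} (h : HasC sg Γ (.sig op V M) X o ι) :
    op ∈ o ∧ HasV sg Γ V (sg op) ∧ HasC sg Γ M X o ι := by
  obtain ⟨o₀, ι₀, h1, h2, hh⟩ := strip_subsume h
  cases hh with
  | sig m a b => exact ⟨h1 m, a, b.subsume h1 h2⟩

theorem inv_int {Γ : Ctx Op} {op V M X o ι} (h : HasC sg Γ (.int op V M) X o ι) :
    ∃ o₀ ι₀, (IAnn.act op (o₀, ι₀)).1 ⊆ o ∧ IAnn.le (IAnn.act op (o₀, ι₀)).2 ι ∧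
      HasV sg Γ V (sg op) ∧ HasC sg Γ M X o₀ ι₀ := by
  obtain ⟨o₁, ι₁, h1, h2, hh⟩ := strip_subsume h
  cases hh with
  | int a b => exact ⟨_, _, h1, h2, a, b⟩

theorem inv_handler {Γ : Ctx Op} {op M V N Y o ι}
    (h : HasC sg Γ (.handler op M V N) Y o ι) :
    ∃ S X o' ι' o'', ι.val [op] = some o'' ∧ o' ⊆ o'' ∧ IAnn.le ι' (ι.subtree op) ∧
      HasC sg (CtxE.tyvar S ::
               CtxE.tyvar (.fn S (.prom X) (∅ : Set Op) (IAnn.single op o' ι')) ::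
               CtxE.tyvar (sg op) :: Γ) M (.prom X) o' ι' ∧
      HasV sg Γ V S ∧ HasC sg (CtxE.tyvar (.prom X) :: Γ) N Y o ι := by
  obtain ⟨o₁, ι₁, h1, h2, hh⟩ := strip_subsume h
  cases hh with
  | handler c1 c2 c3 a b c =>
    obtain ⟨o''₂, hval, hsub⟩ := h2 _ _ c1
    exact ⟨_, _, _, _, o''₂, hval, c2.trans hsub,
      IAnn.le_trans c3 (IAnn.subtree_mono h2 _), a, b, c.subsume h1 h2⟩

theorem inv_await {Γ : Ctx Op} {V M Y o ι} (h : HasC sg Γ (.await V M) Y o ι) :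
    ∃ X, HasV sg Γ V (.prom X) ∧ HasC sg (CtxE.tyvar X :: Γ) M Y o ι := by
  obtain ⟨o₀, ι₀, h1, h2, hh⟩ := strip_subsume h
  cases hh with
  | await a b => exact ⟨_, a, b.subsume h1 h2⟩

theorem inv_unbox {Γ : Ctx Op} {V M Y o ι} (h : HasC sg Γ (.unbox V M) Y o ι) :
    ∃ X, HasV sg Γ V (.box X) ∧ HasC sg (CtxE.tyvar X :: Γ) M Y o ι := by
  obtain ⟨o₀, ι₀, h1, h2, hh⟩ := strip_subsume h
  cases hh with
  | unbox a b => exact ⟨_, a, b.subsume h1 h2⟩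

theorem inv_spawn {Γ : Ctx Op} {M N Y o ι} (h : HasC sg Γ (.spawn M N) Y o ι) :
    ∃ X o' ι', HasC sg (CtxE.lock :: Γ) M X o' ι' ∧ HasC sg Γ N Y o ι := by
  obtain ⟨o₀, ι₀, h1, h2, hh⟩ := strip_subsume h
  cases hh with
  | spawn a b => exact ⟨_, _, _, a, b.subsume h1 h2⟩

end Inversion

section StepPres
variable {Op : Type} [DecidableEq Op] {sg : Op → VTy Op}

theorem single_val_op (op : Op) (o' : Set Op) (ι' : IAnn Op) :
    (IAnn.single op o' ι').val [op] = some o' := by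
  show (if op = op then (if ([] : List Op) = [] then some o' else ι'.val []) else none) = some o'
  simp

theorem single_subtree_le (op : Op) (o' : Set Op) (ι' : IAnn Op) :
    IAnn.le ι' ((IAnn.single op o' ι').subtree op) := by
  intro l o h
  match l with
  | [] => rw [ι'.nil_none] at h; exact (Option.some_ne_none _ h.symm).elim
  | a :: t =>
    refine ⟨o, ?_, subset_rfl⟩
    show (if op = op then (if a :: t = ([] : List Op) then some o' else ι'.val (a :: t)) else none) = some o
    rw [if_pos rfl, if_neg (by simp)]
    exact h

theorem pres_step {Γ : Ctx Op} {M N : Comp Op} {X o ι}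
    (hs : Step M N) (h : HasC sg Γ M X o ι) : HasC sg Γ N X o ι := by
  induction hs generalizing Γ X o ι with
  | beta =>
    obtain ⟨X', o₀, ι₀, h1, h2, hf, ha⟩ := inv_app h
    cases hf with
    | lam hm => exact (substC_ty hm (sub1_ok ha)).subsume h1 h2
  | letRet =>
    obtain ⟨X', hM, hN⟩ := inv_letin h
    exact substC_ty hN (sub1_ok (inv_ret hM))
  | matchPair =>
    obtain ⟨A, B, hv, hm⟩ := inv_matchPair h
    cases hv with
    | pair ha hb => exact substC_ty hm (sub2_ok ha hb)
  | matchInl =>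
    obtain ⟨A, B, hv, hm, hn⟩ := inv_matchSum h
    cases hv with
    | inl ha => exact substC_ty hm (sub1_ok ha)
  | matchInr =>
    obtain ⟨A, B, hv, hm, hn⟩ := inv_matchSum h
    cases hv with
    | inr ha => exact substC_ty hn (sub1_ok ha)
  | letSig =>
    obtain ⟨X', hM, hN⟩ := inv_letin h
    obtain ⟨hmem, hV, hM'⟩ := inv_sig hM
    exact HasC.sig hmem hV (HasC.letin hM' hN)
  | letHandler =>
    obtain ⟨X', hH, hN₂⟩ := inv_letin h
    obtain ⟨S, XX, o', ι', o'', c1, c2, c3, hM, hV, hN₁⟩ := inv_handler hH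
    exact HasC.handler c1 c2 c3 hM hV
      (HasC.letin hN₁ (renameC_ty hN₂ ((RenOK.succ _).lift _)))
  | letAwait =>
    obtain ⟨X', hA, hN₂⟩ := inv_letin h
    obtain ⟨A, hW, hM⟩ := inv_await hA
    exact HasC.await hW (HasC.letin hM (renameC_ty hN₂ ((RenOK.succ _).lift _)))
  | letSpawn =>
    obtain ⟨X', hS, hN₂⟩ := inv_letin h
    obtain ⟨A, oa, ia, hM, hN₁⟩ := inv_spawn hS
    exact HasC.spawn hM (HasC.letin hN₁ hN₂)
  | handlerSig =>
    obtain ⟨S, XX, o', ι', o'', c1, c2, c3, hM, hV, hSig⟩ := inv_handler h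
    obtain ⟨hmem, hW', hN⟩ := inv_sig hSig
    exact HasC.sig hmem (strengthenV hW') (HasC.handler c1 c2 c3 hM hV hN)
  | handlerSpawn =>
    obtain ⟨S, XX, o', ι', o'', c1, c2, c3, hM, hV, hSp⟩ := inv_handler h
    obtain ⟨A, oa, ia, hN₁', hN₂⟩ := inv_spawn hSp
    have hN₁ := anti_rename.2 hN₁' _ Nat.succ _ rfl ((AntiOK.succ _).lock)
    exact HasC.spawn hN₁ (HasC.handler c1 c2 c3 hM hV hN₂)
  | intRet =>
    obtain ⟨o₀, ι₀, h1, h2, hV, hM⟩ := inv_int h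
    exact HasC.ret (inv_ret hM)
  | intSig =>
    obtain ⟨o₀, ι₀, h1, h2, hV, hM⟩ := inv_int h
    obtain ⟨hmem, hW, hM'⟩ := inv_sig hM
    exact (HasC.sig (IAnn.fst_act _ (o₀, ι₀) hmem) hW (HasC.int hV hM')).subsume h1 h2
  | @intHandler op V M W N =>
    obtain ⟨o₀, ι₀, h1, h2, hV, hH⟩ := inv_int h
    obtain ⟨S, XX, o', ι', o'', c1, c2, c3, hM, hW, hN⟩ := inv_handler hH
    have hact : IAnn.act op (o₀, ι₀) =
        (o₀ ∪ o'', IAnn.join (IAnn.update ι₀ op) (ι₀.subtree op)) := IAnn.act_eq_some c1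
    have ho' : o' ⊆ o := by
      refine (c2.trans ?_).trans h1
      rw [hact]; exact Set.subset_union_right
    have h2' : IAnn.le (IAnn.join (IAnn.update ι₀ op) (ι₀.subtree op)) ι := by
      have := h2; rw [hact] at this; exact this
    have hι' : IAnn.le ι' ι :=
      IAnn.le_trans c3 (IAnn.le_trans (IAnn.le_join_right _ _) h2')
    have hrein : HasV sg Γ (reinstall op M)
        (.fn S (.prom XX) (∅ : Set Op) (IAnn.single op o' ι')) := by
      refine HasV.lam (HasC.handler (single_val_op op o' ι') subset_rfl
        (single_subtree_le op o' ι')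
        (renameC_ty hM ((((RenOK.succ S).lift (sg op)).lift _).lift S)) ?_ ?_)
      · exact HasV.var Lookup.here (by simp)
      · exact HasC.ret (HasV.var Lookup.here (by simp))
    have hsub := substC_ty hM (sub3_ok hV hrein hW)
    have hint : HasC sg (CtxE.tyvar (.prom XX) :: Γ) (.int op (renameV Nat.succ V) N)
        X (IAnn.act op (o₀, ι₀)).1 (IAnn.act op (o₀, ι₀)).2 :=
      HasC.int (renameV_ty hV (RenOK.succ _)) hN
    exact HasC.letin (hsub.subsume ho' hι') (hint.subsume h1 h2)
  | @intHandlerNeq op op' V M W N hne =>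
    obtain ⟨o₀, ι₀, h1, h2, hV, hH⟩ := inv_int h
    obtain ⟨S, XX, o', ι', o'', c1, c2, c3, hM, hW, hN⟩ := inv_handler hH
    have key : ∃ o₂, (IAnn.act op' (o₀, ι₀)).2.val [op] = some o₂ ∧ o'' ⊆ o₂ := by
      cases hq : ι₀.val [op'] with
      | none => rw [IAnn.act_eq_none hq]; exact ⟨o'', c1, subset_rfl⟩
      | some o₃ =>
        rw [IAnn.act_eq_some hq]
        have hupd : (IAnn.update ι₀ op').val [op] = some o'' := by
          show (if op = op' then none else ι₀.val [op]) = some o''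
          rw [if_neg hne]; exact c1
        obtain ⟨z, hz, hzs⟩ := IAnn.ojoin_some_left (b := (ι₀.subtree op').val [op]) hupd
        exact ⟨z, hz, hzs⟩
    obtain ⟨o₂, hval2, hsub2⟩ := key
    obtain ⟨o₃, hval3, hsub3⟩ := h2 _ _ hval2
    have hst : IAnn.le (ι₀.subtree op) ((IAnn.act op' (o₀, ι₀)).2.subtree op) := by
      cases hq : ι₀.val [op'] with
      | none => rw [IAnn.act_eq_none hq]; exact IAnn.le_refl _
      | some o₃' =>
        rw [IAnn.act_eq_some hq]
        intro l oo hsome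
        match l with
        | [] => simp [IAnn.subtree] at hsome
        | a :: t =>
          have hl : ι₀.val (op :: a :: t) = some oo := hsome
          have hupd : (IAnn.update ι₀ op').val (op :: a :: t) = some oo := by
            show (if op = op' then none else ι₀.val (op :: a :: t)) = some oo
            rw [if_neg hne]; exact hl
          obtain ⟨z, hz, hzs⟩ :=
            IAnn.ojoin_some_left (b := (ι₀.subtree op').val (op :: a :: t)) hupd
          exact ⟨z, hz, hzs⟩
    refine HasC.handler hval3 (c2.trans (hsub2.trans hsub3))
      (IAnn.le_trans c3 (IAnn.le_trans hst (IAnn.subtree_mono h2 op))) hM hW ?_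
    exact (HasC.int (renameV_ty hV (RenOK.succ _)) hN).subsume h1 h2
  | intAwait =>
    obtain ⟨o₀, ι₀, h1, h2, hV, hA⟩ := inv_int h
    obtain ⟨A, hW, hM⟩ := inv_await hA
    exact (HasC.await hW (HasC.int (renameV_ty hV (RenOK.succ _)) hM)).subsume h1 h2
  | intSpawn =>
    obtain ⟨o₀, ι₀, h1, h2, hV, hS⟩ := inv_int h
    obtain ⟨A, oa, ia, hM, hN⟩ := inv_spawn hS
    exact (HasC.spawn hM (HasC.int hV hN)).subsume h1 h2
  | awaitProm =>
    obtain ⟨A, hv, hm⟩ := inv_await h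
    cases hv with
    | prom ha => exact substC_ty hm (sub1_ok ha)
  | unboxBox =>
    obtain ⟨A, hv, hm⟩ := inv_unbox h
    cases hv with
    | box hb => exact substC_ty hm (sub1_ok (unlockV hb))
  | ctxLet _ ih =>
    obtain ⟨X', hM, hN⟩ := inv_letin h
    exact HasC.letin (ih hM) hN
  | ctxSig _ ih =>
    obtain ⟨hmem, hV, hM⟩ := inv_sig h
    exact HasC.sig hmem hV (ih hM)
  | ctxInt _ ih =>
    obtain ⟨o₀, ι₀, h1, h2, hV, hM⟩ := inv_int h
    exact (HasC.int hV (ih hM)).subsume h1 h2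
  | ctxHandler _ ih =>
    obtain ⟨S, XX, o', ι', o'', c1, c2, c3, hM, hV, hN⟩ := inv_handler h
    exact HasC.handler c1 c2 c3 hM hV (ih hN)
  | ctxSpawn _ ih =>
    obtain ⟨A, oa, ia, hM, hN⟩ := inv_spawn h
    exact HasC.spawn hM (ih hN)

end StepPres

section ProcPres
variable {Op : Type} [DecidableEq Op] {sg : Op → VTy Op}

theorem pres_pstep {Γ : Ctx Op} {P Q : Proc Op} {C : PTy (VTy Op) Op}
    (hs : PStep P Q) (ht : HasP sg Γ P C) :
    ∃ D : PTy (VTy Op) Op, PTy.Red C D ∧ HasP sg Γ Q D := by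
  induction hs generalizing C with
  | run hstep =>
    cases ht with
    | run hM => exact ⟨_, PTy.red_refl _, HasP.run (pres_step hstep hM)⟩
  | hoist =>
    cases ht with
    | run hM =>
      obtain ⟨hmem, hV, hM'⟩ := inv_sig hM
      exact ⟨_, PTy.red_refl _, HasP.sig hmem hV (HasP.run hM')⟩
  | spawn =>
    cases ht with
    | run hM =>
      obtain ⟨A, oa, ia, hM₁, hN⟩ := inv_spawn hM
      exact ⟨PTy.par (PTy.run A oa ia) (PTy.run _ _ _),
        PTy.Red.spawnR A oa ia _ _ _,
        HasP.par (HasP.run (unlockC hM₁)) (HasP.run hN)⟩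
  | @bcastL op V P₁ Q₁ =>
    cases ht with
    | par hP hQ =>
      cases hP with
      | sig hmem hV hP' =>
        refine ⟨PTy.par _ (PTy.pact op _), PTy.Red.par (PTy.red_refl _) (PTy.red_pact_self op _), ?_⟩
        exact HasP.sig (Set.mem_union_left _ hmem) hV (HasP.par hP' (HasP.int hV hQ))
  | @bcastR op V P₁ Q₁ =>
    cases ht with
    | par hP hQ =>
      cases hQ with
      | sig hmem hV hQ' =>
        refine ⟨PTy.par (PTy.pact op _) _, PTy.Red.par (PTy.red_pact_self op _) (PTy.red_refl _), ?_⟩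
        exact HasP.sig (Set.mem_union_right _ hmem) hV (HasP.par (HasP.int hV hP) hQ')
  | intRun =>
    cases ht with
    | int hV hP =>
      cases hP with
      | run hM => exact ⟨_, PTy.red_refl _, HasP.run (HasC.int hV hM)⟩
  | intPar =>
    cases ht with
    | int hV hP =>
      cases hP with
      | par h1 h2 =>
        exact ⟨_, PTy.red_refl _, HasP.par (HasP.int hV h1) (HasP.int hV h2)⟩
  | intSig =>
    cases ht with
    | int hV hP =>
      cases hP with
      | sig hmem hW hP' =>
        exact ⟨_, PTy.red_refl _,
          HasP.sig (PTy.signalsOf_pact_mono _ _ hmem) hW (HasP.int hV hP')⟩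
  | ctxParL _ ih =>
    cases ht with
    | par hP hQ =>
      obtain ⟨D, hred, hD⟩ := ih hP
      exact ⟨_, PTy.Red.par hred (PTy.red_refl _), HasP.par hD hQ⟩
  | ctxParR _ ih =>
    cases ht with
    | par hP hQ =>
      obtain ⟨D, hred, hD⟩ := ih hQ
      exact ⟨_, PTy.Red.par (PTy.red_refl _) hred, HasP.par hP hD⟩
  | ctxSig _ ih =>
    cases ht with
    | sig hmem hV hP =>
      obtain ⟨D, hred, hD⟩ := ih hP
      exact ⟨D, hred, HasP.sig (PTy.signalsOf_red_mono hred hmem) hV hD⟩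
  | ctxInt _ ih =>
    cases ht with
    | int hV hP =>
      obtain ⟨D, hred, hD⟩ := ih hP
      exact ⟨_, PTy.red_pact hred _, HasP.int hV hD⟩

end ProcPres

/-- Type preservation for processes: if `Γ ⊢ P : C` and `P ⇝ Q`, then there
is a process type `D` with `C ⇝ D` (process type reduction) and `Γ ⊢ Q : D`.
(The signature `sg` assigns mobile payload types to all names.) -/
theorem preservation_processes {Op : Type} [DecidableEq Op]
    (sg : Op → VTy Op) (hmob : ∀ op : Op, Mobile (sg op))
    (Γ : Ctx Op) (P Q : Proc Op) (C : PTy (VTy Op) Op)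
    (ht : HasP sg Γ P C) (hs : PStep P Q) :
    ∃ D : PTy (VTy Op) Op, PTy.Red C D ∧ HasP sg Γ Q D :=
  pres_pstep hs ht
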